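/- arXiv:math/0606004 — 2 statements merged into one kernel-verified Lean document; each statement's English description precedes it below -/
import Mathlib

section
/- Let (𝒫,𝒬) be a strong parallelepiped structure on a nonempty set X with structure group 𝒢 and fiber group F, the latter regarded as a subgroup of 𝒢 via u ↦ (x ↦ u·x). Let G be a subgroup of 𝒢 containing F that acts transitively on X, let i ∈ X be the basepoint, let Γ be the stabilizer of i in G, and identify X with G/Γ via gΓ ↦ g·i. Then G₂ ⊆ F ⊆ Z(G) and Γ ∩ F = {1}, and under this identification the parallelepiped structure (𝒫,𝒬) coincides with the nilparallelepiped structure (𝒫_X,𝒬_X) associated to G, F and Γ, i.e. 𝒫 = π^{[2]}(G^{[2,1]}·F^{[2]}) and 𝒬 = π^{[3]}(G^{[3,2]}·F^{[3,1]}) where π: G → G/Γ is the projection. -/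
open scoped Pointwise

namespace HK

/-- Quadruples of elements of `X`, indexed by the vertices `00, 01, 10, 11` of the square. -/
abbrev Quad (X : Type) := X × X × X × X

/-- Vertices of the cube `{0,1}³`. -/
abbrev Vtx := Fin 3 → Bool

/-- Elements of `X^{[3]} = X⁸`, indexed by the vertices of the cube. -/
abbrev Cube (X : Type) := Vtx → X

variable {X Y : Type}

/-- Apply a map coordinatewise to a quadruple. -/
def map4 (f : X → Y) (p : Quad X) : Quad Y := (f p.1, f p.2.1, f p.2.2.1, f p.2.2.2)

/-- Apply a map coordinatewise to a cube. -/
def mapCube (f : X → Y) (x : Cube X) : Cube Y := fun v => f (x v)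

/-- A weak parallelogram structure: the relation `(x00,x01) ∼ (x10,x11) ↔ (x00,x01,x10,x11) ∈ P`
is an equivalence relation, `P` is invariant under exchanging the two middle entries, and
any three points can be completed to a parallelogram. -/
def IsWeakParallelogram (P : Set (Quad X)) : Prop :=
  (∀ a b : X, (a, b, a, b) ∈ P) ∧
  (∀ a b c d : X, (a, b, c, d) ∈ P → (c, d, a, b) ∈ P) ∧
  (∀ a b c d e f : X, (a, b, c, d) ∈ P → (c, d, e, f) ∈ P → (a, b, e, f) ∈ P) ∧
  (∀ a b c d : X, (a, b, c, d) ∈ P → (a, c, b, d) ∈ P) ∧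
  (∀ a b c : X, ∃ d, (a, b, c, d) ∈ P)

/-- A strong parallelogram structure: the completing fourth point is unique. -/
def IsStrongParallelogram (P : Set (Quad X)) : Prop :=
  IsWeakParallelogram P ∧ ∀ a b c : X, ∃! d, (a, b, c, d) ∈ P

/-- The entry of a quadruple at a vertex of the square. -/
def quadAt (p : Quad X) : Bool → Bool → X
  | false, false => p.1
  | false, true => p.2.1
  | true, false => p.2.2.1
  | true, true => p.2.2.2

/-- The cube whose face `ε₁ = 0` is `p` and whose face `ε₁ = 1` is `q`. -/
def joinQuad (p q : Quad X) : Cube X :=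
  fun v => if v 0 = false then quadAt p (v 1) (v 2) else quadAt q (v 1) (v 2)

/-- The vertex of the cube with value `b` at coordinate `i` and values `u,v` at the two
remaining coordinates, taken in increasing order. -/
def insert3 (i : Fin 3) (b u v : Bool) : Vtx :=
  if i = 0 then ![b, u, v] else if i = 1 then ![u, b, v] else ![u, v, b]

/-- The face `{v : v i = b}` of a cube, as a quadruple in lexicographic order. -/
def face (x : Cube X) (i : Fin 3) (b : Bool) : Quad X :=
  (x (insert3 i b false false), x (insert3 i b false true),
   x (insert3 i b true false), x (insert3 i b true true))

/-- The permutations of the vertices of the cube induced by Euclidean isometries of the unit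
cube: a permutation of the three coordinates composed with flips of some coordinates. -/
def cubeSym (σ : Equiv.Perm (Fin 3)) (c : Vtx) (v : Vtx) : Vtx :=
  fun j => xor (v (σ j)) (c j)

/-- A weak parallelepiped structure `(P, Q)`: every face of an element of `Q` lies in `P`;
`Q` is invariant under the Euclidean permutations of the cube; the relation `≈` on `P`
(`p ≈ q ↔ joinQuad p q ∈ Q`) is an equivalence relation; and seven points whose three
determined faces lie in `P` can be completed to an element of `Q`. -/
def IsWeakParallelepiped (P : Set (Quad X)) (Q : Set (Cube X)) : Prop :=
  IsWeakParallelogram P ∧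
  (∀ x ∈ Q, ∀ (i : Fin 3) (b : Bool), face x i b ∈ P) ∧
  (∀ (σ : Equiv.Perm (Fin 3)) (c : Vtx), ∀ x ∈ Q, (fun v => x (cubeSym σ c v)) ∈ Q) ∧
  (∀ p ∈ P, joinQuad p p ∈ Q) ∧
  (∀ p q : Quad X, joinQuad p q ∈ Q → joinQuad q p ∈ Q) ∧
  (∀ p q r : Quad X, joinQuad p q ∈ Q → joinQuad q r ∈ Q → joinQuad p r ∈ Q) ∧
  (∀ x000 x001 x010 x011 x100 x101 x110 : X,
    (x000, x001, x010, x011) ∈ P → (x000, x010, x100, x110) ∈ P →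
    (x000, x001, x100, x101) ∈ P →
    ∃ x111, joinQuad (x000, x001, x010, x011) (x100, x101, x110, x111) ∈ Q)

/-- A strong parallelepiped structure: the completing eighth point is unique. -/
def IsStrongParallelepiped (P : Set (Quad X)) (Q : Set (Cube X)) : Prop :=
  IsWeakParallelepiped P Q ∧
  ∀ x000 x001 x010 x011 x100 x101 x110 : X,
    (x000, x001, x010, x011) ∈ P → (x000, x010, x100, x110) ∈ P →
    (x000, x001, x100, x101) ∈ P →
    ∃! x111, joinQuad (x000, x001, x010, x011) (x100, x101, x110, x111) ∈ Q

/-- The setoid on `X²` given by the parallelogram relation `∼`. -/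
def baseSetoid (P : Set (Quad X)) (hP : IsWeakParallelogram P) : Setoid (X × X) where
  r p q := (p.1, p.2, q.1, q.2) ∈ P
  iseqv := ⟨fun p => hP.1 p.1 p.2,
            fun h => hP.2.1 _ _ _ _ h,
            fun h h' => hP.2.2.1 _ _ _ _ _ _ h h'⟩

/-- The base `B = X²/∼` of a weak parallelogram structure. -/
def Base (P : Set (Quad X)) (hP : IsWeakParallelogram P) : Type := Quotient (baseSetoid P hP)

/-- The class `⟨x,y⟩ ∈ B` of a pair `(x,y)`. -/
def cls (P : Set (Quad X)) (hP : IsWeakParallelogram P) (x y : X) : Base P hP :=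
  Quotient.mk (baseSetoid P hP) (x, y)

/-- The Gowers-type sum over parallelograms attached to a finitely supported `f : X → ℂ`. -/
noncomputable def gSum2 (P : Set (Quad X)) (f : X →₀ ℂ) : ℂ :=
  ∑ᶠ q ∈ P, f q.1 * (starRingEnd ℂ) (f q.2.1) * (starRingEnd ℂ) (f q.2.2.1) * f q.2.2.2

/-- The seminorm `‖f‖_P = (gSum2 P f)^{1/4}`. -/
noncomputable def pNorm (P : Set (Quad X)) (f : X →₀ ℂ) : ℝ :=
  (gSum2 P f).re ^ ((1 : ℝ) / 4)

/-- `C^{|ε|} z`: conjugate `z` when the vertex `v` has an odd number of `1` entries. -/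
noncomputable def cConjFactor (v : Vtx) (z : ℂ) : ℂ :=
  if xor (v 0) (xor (v 1) (v 2)) then (starRingEnd ℂ) z else z

/-- The Gowers-type sum over parallelepipeds attached to a finitely supported `f : X → ℂ`. -/
noncomputable def gSum3 (Q : Set (Cube X)) (f : X →₀ ℂ) : ℂ :=
  ∑ᶠ x ∈ Q, ∏ v : Vtx, cConjFactor v (f (x v))

/-- The seminorm `‖f‖_Q = (gSum3 Q f)^{1/8}`. -/
noncomputable def qNorm (Q : Set (Cube X)) (f : X →₀ ℂ) : ℝ :=
  (gSum3 Q f).re ^ ((1 : ℝ) / 8)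

/-- The structure group of a parallelepiped structure, as a set of bijections of `X`:
those `g` mapping every parallelogram to an equivalent parallelogram. -/
def structSet (P : Set (Quad X)) (Q : Set (Cube X)) : Set (Equiv.Perm X) :=
  {g | ∀ p ∈ P, map4 g p ∈ P ∧ joinQuad (map4 g p) p ∈ Q}

/-- `x` and `y` lie in the same fiber of `π : X → B`, `π(x) = ⟨i,x⟩`. -/
def sameFiber (P : Set (Quad X)) (i x y : X) : Prop := (i, x, i, y) ∈ P

/-- A vertical quadruple: all four points lie in one fiber. -/
def VerticalQ (P : Set (Quad X)) (i : X) (w : Quad X) : Prop :=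
  sameFiber P i w.1 w.2.1 ∧ sameFiber P i w.2.1 w.2.2.1 ∧ sameFiber P i w.2.2.1 w.2.2.2

/-- `y = u·x` where `u = [w]` is the class of the vertical parallelogram `w`:
`(x,x,x,y)` is a parallelogram equivalent to `w`. -/
def actsRel (P : Set (Quad X)) (Q : Set (Cube X)) (w : Quad X) (x y : X) : Prop :=
  (x, x, x, y) ∈ P ∧ joinQuad (x, x, x, y) w ∈ Q

section Groups

variable (G : Type) [Group G]

/-- The diagonal embedding `G → G^{[2]}`. -/
def diagHom2 : G →* Quad G where
  toFun g := (g, g, g, g)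
  map_one' := rfl
  map_mul' _ _ := rfl

/-- The diagonal embedding `G → G^{[3]}`. -/
def diagHom3 : G →* Cube G where
  toFun g := fun _ => g
  map_one' := rfl
  map_mul' _ _ := rfl

/-- The two dimensional edge group `G^{[2,1]}`. -/
def edgeGroup2 : Subgroup (Quad G) :=
  Subgroup.closure
    {q : Quad G | ∃ g : G, q = (g, g, 1, 1) ∨ q = (g, 1, g, 1) ∨ q = (g, g, g, g)}

/-- The second commutator subgroup `G₃ = [G, G₂]`. -/
def secondCommutator : Subgroup G := ⁅(⊤ : Subgroup G), commutator G⁆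

variable {G}

/-- The edge group `F^{[2,1]}` of a subgroup `F ≤ G`, inside `G^{[2]}`. -/
def edgeGroup2Of (F : Subgroup G) : Subgroup (Quad G) :=
  Subgroup.closure
    {q : Quad G | ∃ u ∈ F, q = (u, u, 1, 1) ∨ q = (u, 1, u, 1) ∨ q = (u, u, u, u)}

/-- `F^{[2]} = F⁴` as a subgroup of `G^{[2]}`. -/
def quadSub (F : Subgroup G) : Subgroup (Quad G) := F.prod (F.prod (F.prod F))

/-- Faces of the cube `{0,1}³`. -/
def IsFace3 (α : Set Vtx) : Prop := ∃ (i : Fin 3) (b : Bool), α = {v : Vtx | v i = b}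

/-- Edges of the cube `{0,1}³`. -/
def IsEdge3 (α : Set Vtx) : Prop :=
  ∃ (i j : Fin 3) (b c : Bool), i ≠ j ∧ α = {v : Vtx | v i = b ∧ v j = c}

open Classical in
/-- The element `g^{[3,α]}` of `G^{[3]}`, with coordinate `g` on `α` and `1` elsewhere. -/
noncomputable def cubeElt (α : Set Vtx) (g : G) : Cube G :=
  fun v => if v ∈ α then g else 1

variable (G)

/-- The face group `G^{[3,2]}`, generated by the `g^{[3,f]}` for faces `f` of the cube. -/
noncomputable def faceGroup : Subgroup (Cube G) :=
  Subgroup.closure {x : Cube G | ∃ (g : G) (α : Set Vtx), IsFace3 α ∧ x = cubeElt α g}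

variable {G}

/-- The edge group `F^{[3,1]}` of a subgroup `F ≤ G`, generated by the `u^{[3,e]}` for
`u ∈ F` and edges `e` of the cube. -/
noncomputable def edgeGroup3 (F : Subgroup G) : Subgroup (Cube G) :=
  Subgroup.closure {x : Cube G | ∃ u ∈ F, ∃ α : Set Vtx, IsEdge3 α ∧ x = cubeElt α u}

end Groups

/-- The data realizing `(PY, QY)` as the nilparallelepiped structure associated to
`G`, `F`, `Γ` via the coset projection `p : G → Y ≅ G/Γ`. -/
def NilWitness (G : Type) [Group G] (F Γ : Subgroup G) {Y : Type} (p : G → Y)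
    (PY : Set (Quad Y)) (QY : Set (Cube Y)) : Prop :=
  commutator G ≤ F ∧ F ≤ Subgroup.center G ∧ Γ ⊓ F = ⊥ ∧
  Function.Surjective p ∧ (∀ g g' : G, p g = p g' ↔ g⁻¹ * g' ∈ Γ) ∧
  PY = map4 p '' ((edgeGroup2 G : Set (Quad G)) * (quadSub F : Set (Quad G))) ∧
  QY = mapCube p '' ((faceGroup G : Set (Cube G)) * (edgeGroup3 F : Set (Cube G)))

/-- `(PY, QY)` is a nilparallelepiped structure. -/
def IsNilStructure {Y : Type} (PY : Set (Quad Y)) (QY : Set (Cube Y)) : Prop :=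
  ∃ (G : Type) (inst : Group G) (F Γ : @Subgroup G inst) (p : G → Y),
    @NilWitness G inst F Γ Y p PY QY

/-- A splitting of the exact sequence `0 → F → P_s → B → 0` for `s = ⟨a₀, b₀⟩`, encoded
by a lift `ψ : X → 𝒫_s` of a homomorphism section `φ : B → P_s` of `q_s`:
`ψ x` is a parallelogram in `𝒫_s` representing the class `φ(π(x))`. -/
def IsSplittingAt (P : Set (Quad X)) (Q : Set (Cube X)) (i a₀ b₀ : X) : Prop :=
  ∃ ψ : X → Quad X,
    (∀ x, ψ x ∈ P) ∧
    (∀ x, (a₀, b₀, (ψ x).1, (ψ x).2.1) ∈ P) ∧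
    (∀ x, ((ψ x).1, (ψ x).2.2.1, i, x) ∈ P) ∧
    (∀ x y, (i, x, i, y) ∈ P → joinQuad (ψ x) (ψ y) ∈ Q) ∧
    (∀ x1 x2 x3, (x1, x3, i, x2) ∈ P →
      ∃ c d, joinQuad ((ψ x1).2.2.1, (ψ x1).2.2.2, c, d) (ψ x2) ∈ Q ∧
        joinQuad ((ψ x1).1, (ψ x1).2.1, c, d) (ψ x3) ∈ Q)

/-- `(B, c)` is a realization of the base group of the parallelogram structure `P`,
`c x y` realizing the class `⟨x,y⟩`. -/
def IsBaseRealization (P : Set (Quad X)) (B : Type) [AddCommGroup B] (c : X → X → B) : Prop :=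
  (Function.Surjective fun p : X × X => c p.1 p.2) ∧
  (∀ a b a' b' : X, c a b = c a' b' ↔ (a, b, a', b') ∈ P) ∧
  (∀ a b d : X, c a b + c b d = c a d)

/-- `(F, fl)` is a realization of the fiber group of the parallelepiped structure `(P, Q)`:
`fl` maps vertical parallelograms onto `F`, separates exactly the `≈`-classes, and is
additive with respect to the composition of vertical parallelograms. -/
def IsFiberRealization (P : Set (Quad X)) (Q : Set (Cube X)) (i : X) (F : Type)
    [AddCommGroup F] (fl : Quad X → F) : Prop :=
  (∀ u : F, ∃ w, VerticalQ P i w ∧ fl w = u) ∧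
  (∀ w w' : Quad X, VerticalQ P i w → VerticalQ P i w' →
    (fl w = fl w' ↔ joinQuad w w' ∈ Q)) ∧
  (∀ x0 x1 x2 x3 x4 x5 : X, sameFiber P i x0 x1 → sameFiber P i x1 x2 →
    sameFiber P i x2 x3 → sameFiber P i x3 x4 → sameFiber P i x4 x5 →
    fl (x0, x1, x2, x3) + fl (x2, x3, x4, x5) = fl (x0, x1, x4, x5))

/-- A divisible (equivalently, injective) abelian group. -/
def IsDivisibleGroup (F : Type) [AddCommGroup F] : Prop :=
  ∀ (u : F) (n : ℕ), 0 < n → ∃ v : F, n • v = u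

/-- A projective abelian group (projective as a `ℤ`-module). -/
def IsProjectiveAdd (B : Type) [AddCommGroup B] : Prop := Module.Projective ℤ B

open scoped commutatorElement

theorem Equiv.Perm.apply_inv_self {α : Type*} (f : Equiv.Perm α) (x : α) : f (f⁻¹ x) = x :=
  Equiv.apply_symm_apply f x

theorem Equiv.Perm.inv_apply_self {α : Type*} (f : Equiv.Perm α) (x : α) : f⁻¹ (f x) = x :=
  Equiv.symm_apply_apply f x


namespace SP

open Equiv

variable {X : Type} {P : Set (Quad X)} {Q : Set (Cube X)}

/-! ### permutations of `Fin 3` -/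

def sw01 : Equiv.Perm (Fin 3) := ⟨![1,0,2], ![1,0,2], by decide, by decide⟩
def sw02 : Equiv.Perm (Fin 3) := ⟨![2,1,0], ![2,1,0], by decide, by decide⟩
def sw12 : Equiv.Perm (Fin 3) := ⟨![0,2,1], ![0,2,1], by decide, by decide⟩
def pid3 : Equiv.Perm (Fin 3) := ⟨![0,1,2], ![0,1,2], by decide, by decide⟩
def p120 : Equiv.Perm (Fin 3) := ⟨![1,2,0], ![2,0,1], by decide, by decide⟩
def p201 : Equiv.Perm (Fin 3) := ⟨![2,0,1], ![1,2,0], by decide, by decide⟩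

def ff : Vtx := fun _ => false

lemma vtx_eta (v : Vtx) : ![v 0, v 1, v 2] = v := by funext j; fin_cases j <;> rfl

/-! ### parallelogram toolkit -/

section
variable (h : IsStrongParallelepiped P Q)
include h

lemma rrefl (a b : X) : (a,b,a,b) ∈ P := h.1.1.1 a b
lemma rsymm {a b c d : X} (h1 : (a,b,c,d) ∈ P) : (c,d,a,b) ∈ P := h.1.1.2.1 _ _ _ _ h1
lemma rtrans {a b c d e f : X} (h1 : (a,b,c,d) ∈ P) (h2 : (c,d,e,f) ∈ P) :
    (a,b,e,f) ∈ P := h.1.1.2.2.1 _ _ _ _ _ _ h1 h2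
lemma rmid {a b c d : X} (h1 : (a,b,c,d) ∈ P) : (a,c,b,d) ∈ P := h.1.1.2.2.2.1 _ _ _ _ h1
lemma rflip {a b c d : X} (h1 : (a,b,c,d) ∈ P) : (b,a,d,c) ∈ P :=
  rmid h (rsymm h (rmid h h1))
lemma raa (a b : X) : (a,a,b,b) ∈ P := rmid h (rrefl h a b)

/-! ### cube toolkit -/

lemma qfaces {x : Cube X} (hx : x ∈ Q) (j : Fin 3) (b : Bool) : face x j b ∈ P :=
  h.1.2.1 x hx j b
lemma qsym (σ : Equiv.Perm (Fin 3)) (c : Vtx) {x : Cube X} (hx : x ∈ Q) :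
    (fun v => x (cubeSym σ c v)) ∈ Q := h.1.2.2.1 σ c x hx
lemma erefl {p : Quad X} (hp : p ∈ P) : joinQuad p p ∈ Q := h.1.2.2.2.1 p hp
lemma esymm {p q : Quad X} (h1 : joinQuad p q ∈ Q) : joinQuad q p ∈ Q :=
  h.1.2.2.2.2.1 p q h1
lemma etrans {p q r : Quad X} (h1 : joinQuad p q ∈ Q) (h2 : joinQuad q r ∈ Q) :
    joinQuad p r ∈ Q := h.1.2.2.2.2.2.1 p q r h1 h2

variable {a b c d e f g k : X}

/-- swap coordinates 0,1 -/
lemma m01 (h1 : joinQuad (a,b,c,d) (e,f,g,k) ∈ Q) :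
    joinQuad (a,b,e,f) (c,d,g,k) ∈ Q := by
  have heq : (fun v => joinQuad (a,b,c,d) (e,f,g,k) (cubeSym sw01 ff v))
      = joinQuad (a,b,e,f) (c,d,g,k) := by
    funext v; rw [← vtx_eta v]; rcases v 0 <;> rcases v 1 <;> rcases v 2 <;> rfl
  exact heq ▸ qsym h sw01 ff h1

/-- swap coordinates 0,2 -/
lemma m02 (h1 : joinQuad (a,b,c,d) (e,f,g,k) ∈ Q) :
    joinQuad (a,e,c,g) (b,f,d,k) ∈ Q := by
  have heq : (fun v => joinQuad (a,b,c,d) (e,f,g,k) (cubeSym sw02 ff v))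
      = joinQuad (a,e,c,g) (b,f,d,k) := by
    funext v; rw [← vtx_eta v]; rcases v 0 <;> rcases v 1 <;> rcases v 2 <;> rfl
  exact heq ▸ qsym h sw02 ff h1

/-- swap coordinates 1,2 -/
lemma mmid (h1 : joinQuad (a,b,c,d) (e,f,g,k) ∈ Q) :
    joinQuad (a,c,b,d) (e,g,f,k) ∈ Q := by
  have heq : (fun v => joinQuad (a,b,c,d) (e,f,g,k) (cubeSym sw12 ff v))
      = joinQuad (a,c,b,d) (e,g,f,k) := by
    funext v; rw [← vtx_eta v]; rcases v 0 <;> rcases v 1 <;> rcases v 2 <;> rfl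
  exact heq ▸ qsym h sw12 ff h1

/-- flip coordinate 2 -/
lemma mflip2 (h1 : joinQuad (a,b,c,d) (e,f,g,k) ∈ Q) :
    joinQuad (b,a,d,c) (f,e,k,g) ∈ Q := by
  have heq : (fun v => joinQuad (a,b,c,d) (e,f,g,k) (cubeSym pid3 ![false,false,true] v))
      = joinQuad (b,a,d,c) (f,e,k,g) := by
    funext v; rw [← vtx_eta v]; rcases v 0 <;> rcases v 1 <;> rcases v 2 <;> rfl
  exact heq ▸ qsym h pid3 ![false,false,true] h1

/-- flip coordinate 1 -/
lemma mflip1 (h1 : joinQuad (a,b,c,d) (e,f,g,k) ∈ Q) :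
    joinQuad (c,d,a,b) (g,k,e,f) ∈ Q := by
  have heq : (fun v => joinQuad (a,b,c,d) (e,f,g,k) (cubeSym pid3 ![false,true,false] v))
      = joinQuad (c,d,a,b) (g,k,e,f) := by
    funext v; rw [← vtx_eta v]; rcases v 0 <;> rcases v 1 <;> rcases v 2 <;> rfl
  exact heq ▸ qsym h pid3 ![false,true,false] h1

end

end SP

namespace SP
variable {X : Type} {P : Set (Quad X)} {Q : Set (Cube X)}

section
variable (h : IsStrongParallelepiped P Q)
include h

variable {a b c d e f g k a' b' c' d' e' f' g' k' : X}

lemma rowcomp (h1 : joinQuad (a,b,c,d) (a',b',c',d') ∈ Q)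
    (h2 : joinQuad (c,d,e,f) (c',d',e',f') ∈ Q) :
    joinQuad (a,b,e,f) (a',b',e',f') ∈ Q :=
  m01 h (etrans h (m01 h h1) (m01 h h2))

lemma leftcomp (h1 : joinQuad (a,b,c,d) (a',b',c',d') ∈ Q)
    (h2 : joinQuad (a,b,e,f) (a',b',e',f') ∈ Q) :
    joinQuad (c,d,e,f) (c',d',e',f') ∈ Q :=
  m01 h (etrans h (esymm h (m01 h h1)) (m01 h h2))

lemma colcomp (h1 : joinQuad (e,a,f,c) (e',a',f',c') ∈ Q)
    (h2 : joinQuad (a,b,c,d) (a',b',c',d') ∈ Q) :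
    joinQuad (e,b,f,d) (e',b',f',d') ∈ Q :=
  mmid h (rowcomp h (mmid h h1) (mmid h h2))

/-- two "horizontally degenerate" parallelograms over a parallelogram -/
lemma pairTriv (h1 : (a,b,a',b') ∈ P) :
    joinQuad (a,b,a,b) (a',b',a',b') ∈ Q :=
  m01 h (erefl h h1)

lemma face_join_00 : face (joinQuad (a,b,c,d) (e,f,g,k)) 0 false = (a,b,c,d) := rfl
lemma face_join_01 : face (joinQuad (a,b,c,d) (e,f,g,k)) 0 true = (e,f,g,k) := rfl
lemma face_join_10 : face (joinQuad (a,b,c,d) (e,f,g,k)) 1 false = (a,b,e,f) := rfl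
lemma face_join_11 : face (joinQuad (a,b,c,d) (e,f,g,k)) 1 true = (c,d,g,k) := rfl
lemma face_join_20 : face (joinQuad (a,b,c,d) (e,f,g,k)) 2 false = (a,c,e,g) := rfl
lemma face_join_21 : face (joinQuad (a,b,c,d) (e,f,g,k)) 2 true = (b,d,f,k) := rfl

/-- uniqueness of the completing vertex -/
lemma euniq {k1 k2 : X} (h1 : joinQuad (a,b,c,d) (e,f,g,k1) ∈ Q)
    (h2 : joinQuad (a,b,c,d) (e,f,g,k2) ∈ Q) : k1 = k2 := by
  have hp1 : (a,b,c,d) ∈ P := face_join_00 h ▸ qfaces h h1 0 false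
  have hp2 : (a,c,e,g) ∈ P := face_join_20 h ▸ qfaces h h1 2 false
  have hp3 : (a,b,e,f) ∈ P := face_join_10 h ▸ qfaces h h1 1 false
  obtain ⟨x, -, hu⟩ := h.2 a b c d e f g hp1 hp2 hp3
  exact (hu k1 h1).trans (hu k2 h2).symm

/-- "inversion": swap the distinguished vertex across the degenerate triple -/
lemma flipaaab (h1 : joinQuad (a,a,a,b) (a',a',a',b') ∈ Q) :
    joinQuad (b,b,b,a) (b',b',b',a') ∈ Q := by
  -- B2 := flip2 h1 : (a,a,b,a) (a',a',b',a')
  have B2 := mflip2 h h1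
  -- L : (a,b,a',b') ∈ P  (face 2 true of h1)
  have hL : (a,b,a',b') ∈ P := face_join_21 h ▸ qfaces h h1 2 true
  have L : joinQuad (a,b,a,b) (a',b',a',b') ∈ Q := pairTriv h hL
  have L' := mmid h L  -- (a,a,b,b) (a',a',b',b')
  have K := mflip1 h L'  -- (b,b,a,a) (b',b',a',a')
  exact rowcomp h K B2

end
end SP

namespace SP
variable {X : Type} {P : Set (Quad X)} {Q : Set (Cube X)}

section
variable (h : IsStrongParallelepiped P Q)
include h

section StructElt
variable {σ : Equiv.Perm X} (hσ : σ ∈ structSet P Q)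
include hσ

lemma gP {a b c d : X} (hp : (a,b,c,d) ∈ P) : (σ a, σ b, σ c, σ d) ∈ P := (hσ _ hp).1

omit h in
lemma gE {a b c d : X} (hp : (a,b,c,d) ∈ P) :
    joinQuad (σ a, σ b, σ c, σ d) (a,b,c,d) ∈ Q := (hσ _ hp).2

/-- main transport: a structure element applied along a parallelogram -/
lemma Lg {x y z w : X} (hp : (x,y,z,w) ∈ P) :
    joinQuad (x, σ x, y, σ y) (z, σ z, w, σ w) ∈ Q :=
  m01 h (mflip2 h (m02 h (gE hσ hp)))

lemma pg (x y : X) : (x, σ x, y, σ y) ∈ P :=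
  face_join_10 h ▸ qfaces h (Lg h hσ (raa h x y)) 1 false

end StructElt

variable (i : X)
include i

lemma sf_of_vert {a b : X} (h1 : (a,a,a,b) ∈ P) : (i,a,i,b) ∈ P :=
  rmid h (rtrans h (raa h i a) h1)

lemma vert_of_sf {a b : X} (h1 : (i,a,i,b) ∈ P) : (a,a,a,b) ∈ P :=
  rtrans h (raa h a i) (rmid h h1)

lemma sf_transport {σ : Equiv.Perm X} (hσ : σ ∈ structSet P Q) {a b : X}
    (h1 : (i,a,i,b) ∈ P) : (i, σ a, i, σ b) ∈ P := by
  have h2 : (σ i, σ i, σ a, σ b) ∈ P := rmid h (gP h hσ h1)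
  exact rmid h (rtrans h (raa h i (σ i)) h2)

/-! ### the fiber translations -/

section U
variable {i} {j : X} (hj : (i,i,i,j) ∈ P)
include hj

noncomputable def uFun (x : X) : X :=
  (h.2 i i i j x x x hj (raa h i x) (raa h i x)).choose

lemma uFun_spec (x : X) : joinQuad (i,i,i,j) (x,x,x,uFun h hj x) ∈ Q :=
  (h.2 i i i j x x x hj (raa h i x) (raa h i x)).choose_spec.1

lemma uFun_eq {x y : X} (h1 : joinQuad (i,i,i,j) (x,x,x,y) ∈ Q) : uFun h hj x = y :=
  ((h.2 i i i j x x x hj (raa h i x) (raa h i x)).choose_spec.2 y h1).symm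

lemma uFun_acts (x : X) : joinQuad (x,x,x,uFun h hj x) (i,i,i,j) ∈ Q :=
  esymm h (uFun_spec h hj x)

lemma uFun_vert (x : X) : (x,x,x,uFun h hj x) ∈ P :=
  face_join_00 h ▸ qfaces h (uFun_acts h hj x) 0 false

lemma uFun_at_i : uFun h hj i = j := uFun_eq h hj (erefl h hj)

lemma vert_rev : (j,j,j,i) ∈ P := by
  have h2 : (i,j,i,i) ∈ P := rsymm h (sf_of_vert h i hj)
  exact vert_of_sf h i h2

noncomputable def jinv : X :=
  (h.2 j j j i i i i (vert_rev h hj) (raa h j i) (raa h j i)).choose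

lemma jinv_spec : joinQuad (j,j,j,i) (i,i,i,jinv h hj) ∈ Q :=
  (h.2 j j j i i i i (vert_rev h hj) (raa h j i) (raa h j i)).choose_spec.1

lemma jinv_vert : (i,i,i,jinv h hj) ∈ P :=
  face_join_01 h ▸ qfaces h (jinv_spec h hj) 0 true

lemma uFun_left_inv (x : X) : uFun h (jinv_vert h hj) (uFun h hj x) = x := by
  have A := flipaaab h (uFun_acts h hj x)
  have B := jinv_spec h hj
  exact uFun_eq h (jinv_vert h hj) (esymm h (etrans h A B))

lemma uFun_right_inv (x : X) : uFun h hj (uFun h (jinv_vert h hj) x) = x := by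
  have A' := flipaaab h (uFun_acts h (jinv_vert h hj) x)
  have B2 : joinQuad (jinv h hj, jinv h hj, jinv h hj, i) (i,i,i,j) ∈ Q :=
    esymm h (flipaaab h (jinv_spec h hj))
  exact uFun_eq h hj (esymm h (etrans h A' B2))

noncomputable def uPerm : Equiv.Perm X :=
  ⟨uFun h hj, uFun h (jinv_vert h hj), uFun_left_inv h hj, uFun_right_inv h hj⟩

lemma uPerm_prop : VerticalQ P i (i,i,i,j) ∧ ∀ x : X,
    actsRel P Q (i,i,i,j) x (uPerm h hj x) := by
  refine ⟨⟨rrefl h i i, rrefl h i i, hj⟩, fun x => ⟨uFun_vert h hj x, uFun_acts h hj x⟩⟩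

lemma uPerm_at_i : uPerm h hj i = j := uFun_at_i h hj

end U

/-! ### the fiber predicate on permutations -/

def Sp (P : Set (Quad X)) (Q : Set (Cube X)) : Set (Equiv.Perm X) :=
  {σ | (∀ x : X, (x,x,x,σ x) ∈ P) ∧
    ∀ x y : X, joinQuad (x,x,x,σ x) (y,y,y,σ y) ∈ Q}

lemma uPerm_mem_set {j : X} (hj : (i,i,i,j) ∈ P) :
    uPerm h hj ∈ {g : Equiv.Perm X | ∃ w : Quad X, VerticalQ P i w ∧ ∀ x : X,
      actsRel P Q w x (g x)} :=
  ⟨(i,i,i,j), uPerm_prop h hj⟩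

lemma mem_Sp_iff {σ : Equiv.Perm X} :
    σ ∈ {g : Equiv.Perm X | ∃ w : Quad X, VerticalQ P i w ∧ ∀ x : X,
      actsRel P Q w x (g x)} ↔ σ ∈ Sp P Q := by
  constructor
  · rintro ⟨w, -, ha⟩
    exact ⟨fun x => (ha x).1, fun x y => etrans h (ha x).2 (esymm h (ha y).2)⟩
  · rintro ⟨h1, h2⟩
    exact ⟨(i,i,i,σ i), ⟨rrefl h i i, rrefl h i i, h1 i⟩,
      fun x => ⟨h1 x, h2 x i⟩⟩

lemma Sp_one : (1 : Equiv.Perm X) ∈ Sp P Q :=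
  ⟨fun x => rrefl h x x, fun x y => pairTriv h (raa h x y)⟩

lemma Sp_mul {σ τ : Equiv.Perm X} (hσ : σ ∈ Sp P Q) (hτ : τ ∈ Sp P Q) :
    σ * τ ∈ Sp P Q := by
  constructor
  · intro x
    have v1 : (i, x, i, τ x) ∈ P := sf_of_vert h i (hτ.1 x)
    have v2 : (i, τ x, i, σ (τ x)) ∈ P := sf_of_vert h i (hσ.1 (τ x))
    exact vert_of_sf h i (rtrans h v1 v2)
  · intro x y
    have A := hτ.2 x y
    have B := hσ.2 (τ x) (τ y)
    have hW : (x, τ x, y, τ y) ∈ P := face_join_11 h ▸ qfaces h A 1 true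
    have W := pairTriv h hW
    have D := colcomp h W B
    exact rowcomp h A D

lemma Sp_inv {σ : Equiv.Perm X} (hσ : σ ∈ Sp P Q) : σ⁻¹ ∈ Sp P Q := by
  constructor
  · intro x
    have := hσ.1 (σ⁻¹ x)
    rw [Equiv.Perm.apply_inv_self] at this
    have v1 : (i, σ⁻¹ x, i, x) ∈ P := sf_of_vert h i this
    exact vert_of_sf h i (rsymm h v1)
  · intro x y
    have A := hσ.2 (σ⁻¹ x) (σ⁻¹ y)
    rw [Equiv.Perm.apply_inv_self, Equiv.Perm.apply_inv_self] at A
    exact flipaaab h A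

/-- centrality: fiber translations commute with all structure elements -/
lemma Sp_central {σ τ : Equiv.Perm X} (hσ : σ ∈ structSet P Q) (hτ : τ ∈ Sp P Q)
    (y : X) : σ (τ y) = τ (σ y) := by
  have C2 := gE hσ (hτ.1 y)
  have C1' := hτ.2 (σ y) y
  have hA : (σ y, σ y, σ y, σ (τ y)) ∈ P := gP h hσ (hτ.1 y)
  exact euniq h (erefl h hA) (etrans h C2 (esymm h C1'))

/-- commutators of structure elements are fiber translations -/
lemma comm_key {σ τ : Equiv.Perm X} (hσ : σ ∈ structSet P Q) (hτ : τ ∈ structSet P Q)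
    (c d : X) :
    joinQuad (τ (σ c), τ (σ c), τ (σ c), σ (τ c))
      (τ (σ d), τ (σ d), τ (σ d), σ (τ d)) ∈ Q := by
  have A1 := Lg h hσ (raa h c d)
  have A4 := Lg h hτ (raa h c d)
  have pgcd : (c, σ c, d, σ d) ∈ P := face_join_10 h ▸ qfaces h A1 1 false
  have phcd : (c, τ c, d, τ d) ∈ P := face_join_10 h ▸ qfaces h A4 1 false
  have A2 := Lg h hτ pgcd
  have A3 := Lg h hσ phcd
  have A2' := mmid h A2
  have B := leftcomp h A2' A3
  have B' := mmid h B
  have A4' := mmid h A4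
  have A1' := mmid h A1
  have D1 := leftcomp h A4' A1'
  have C1' := mmid h (Lg h hτ (raa h (σ c) (σ d)))
  have D2 := rowcomp h D1 C1'
  exact leftcomp h D2 B'

lemma Sp_comm {σ τ : Equiv.Perm X} (hσ : σ ∈ structSet P Q) (hτ : τ ∈ structSet P Q) :
    σ * τ * σ⁻¹ * τ⁻¹ ∈ Sp P Q := by
  have key : ∀ x y : X,
      joinQuad (x,x,x,(σ * τ * σ⁻¹ * τ⁻¹) x) (y,y,y,(σ * τ * σ⁻¹ * τ⁻¹) y) ∈ Q := by
    intro x y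
    have hx : ∀ z : X, (σ * τ * σ⁻¹ * τ⁻¹) z = σ (τ (σ⁻¹ (τ⁻¹ z))) := fun z => rfl
    have hc : τ (σ (σ⁻¹ (τ⁻¹ x))) = x := by simp
    have hd : τ (σ (σ⁻¹ (τ⁻¹ y))) = y := by simp
    have := comm_key h i hσ hτ (σ⁻¹ (τ⁻¹ x)) (σ⁻¹ (τ⁻¹ y))
    rw [hc, hd] at this
    exact this
  refine ⟨fun x => ?_, key⟩
  exact face_join_00 h ▸ qfaces h (key x x) 0 false

end
end SP

namespace SP
variable {X : Type} {P : Set (Quad X)} {Q : Set (Cube X)}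

section
variable (h : IsStrongParallelepiped P Q) (i : X)
include h i

/-! ### vertical replacement in parallelograms -/

lemma vrep1 {a a' b c d : X} (hv : (a,a,a,a') ∈ P) (h2 : (a,b,c,d) ∈ P) :
    (a',b,c,d) ∈ P := by
  have h3 : (i,i,a,a') ∈ P := rmid h (sf_of_vert h i hv)
  have h4 : (a',a,i,i) ∈ P := rflip h (rsymm h h3)
  exact rtrans h (rmid h (rtrans h h4 (raa h i b))) h2

lemma vrep2 {a b b' c d : X} (hv : (b,b,b,b') ∈ P) (h2 : (a,b,c,d) ∈ P) :
    (a,b',c,d) ∈ P := rflip h (vrep1 h i hv (rflip h h2))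

lemma vrep3 {a b c c' d : X} (hv : (c,c,c,c') ∈ P) (h2 : (a,b,c,d) ∈ P) :
    (a,b,c',d) ∈ P := rsymm h (vrep1 h i hv (rsymm h h2))

lemma vrep4 {a b c d d' : X} (hv : (d,d,d,d') ∈ P) (h2 : (a,b,c,d) ∈ P) :
    (a,b,c,d') ∈ P := rsymm h (vrep2 h i hv (rsymm h h2))

end

/-- coordinatewise application of a quadruple of elements of `G` -/
def ap2 (G : Subgroup (Equiv.Perm X)) (y : Quad ↥G) (p : Quad X) : Quad X :=
  ((y.1 : Equiv.Perm X) p.1, (y.2.1 : Equiv.Perm X) p.2.1,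
   (y.2.2.1 : Equiv.Perm X) p.2.2.1, (y.2.2.2 : Equiv.Perm X) p.2.2.2)

lemma ap2_mul (G : Subgroup (Equiv.Perm X)) (y z : Quad ↥G) (p : Quad X) :
    ap2 G (y * z) p = ap2 G y (ap2 G z p) := rfl

lemma ap2_one (G : Subgroup (Equiv.Perm X)) (p : Quad X) : ap2 G 1 p = p := rfl

/-- the subgroup of quadruples acting on `P` -/
def K2 (P : Set (Quad X)) (G : Subgroup (Equiv.Perm X)) : Subgroup (Quad ↥G) where
  carrier := {y | (∀ p ∈ P, ap2 G y p ∈ P) ∧ (∀ p ∈ P, ap2 G y⁻¹ p ∈ P)}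
  one_mem' := ⟨fun p hp => by rwa [ap2_one], fun p hp => by rwa [inv_one, ap2_one]⟩
  mul_mem' := by
    rintro y z ⟨hy, hy'⟩ ⟨hz, hz'⟩
    refine ⟨fun p hp => ?_, fun p hp => ?_⟩
    · rw [ap2_mul]; exact hy _ (hz _ hp)
    · rw [mul_inv_rev, ap2_mul]; exact hz' _ (hy' _ hp)
  inv_mem' := by
    rintro y ⟨hy, hy'⟩
    exact ⟨hy', fun p hp => by rw [inv_inv]; exact hy _ hp⟩

section Gp
variable (h : IsStrongParallelepiped P Q) (i : X)
variable (G : Subgroup (Equiv.Perm X)) (hG : (G : Set (Equiv.Perm X)) ⊆ structSet P Q)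

include h hG

lemma act_diag (g : ↥G) {p : Quad X} (hp : p ∈ P) : ap2 G (g,g,g,g) p ∈ P := by
  obtain ⟨a,b,c,d⟩ := p; exact gP h (hG g.2) hp

lemma act_gg11 (g : ↥G) {p : Quad X} (hp : p ∈ P) : ap2 G (g,g,1,1) p ∈ P := by
  obtain ⟨a,b,c,d⟩ := p
  have hpair : ((g : Equiv.Perm X) a, (g : Equiv.Perm X) b, a, b) ∈ P :=
    face_join_10 h ▸ qfaces h (gE (hG g.2) (rrefl h a b)) 1 false
  show ((g : Equiv.Perm X) a, (g : Equiv.Perm X) b,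
    ((1:↥G) : Equiv.Perm X) c, ((1:↥G) : Equiv.Perm X) d) ∈ P
  simpa using rtrans h hpair hp

lemma act_g1g1 (g : ↥G) {p : Quad X} (hp : p ∈ P) : ap2 G (g,1,g,1) p ∈ P := by
  obtain ⟨a,b,c,d⟩ := p
  have h2 := act_gg11 h G hG g (rmid h hp)
  show ((g : Equiv.Perm X) a, ((1:↥G) : Equiv.Perm X) b,
    (g : Equiv.Perm X) c, ((1:↥G) : Equiv.Perm X) d) ∈ P
  have h3 := rmid h h2
  simpa using h3

include i in
lemma act_vert {y : Quad ↥G} (hy1 : (y.1 : Equiv.Perm X) ∈ Sp P Q)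
    (hy2 : (y.2.1 : Equiv.Perm X) ∈ Sp P Q) (hy3 : (y.2.2.1 : Equiv.Perm X) ∈ Sp P Q)
    (hy4 : (y.2.2.2 : Equiv.Perm X) ∈ Sp P Q) {p : Quad X} (hp : p ∈ P) :
    ap2 G y p ∈ P := by
  obtain ⟨a,b,c,d⟩ := p
  exact vrep4 h i (hy4.1 d) (vrep3 h i (hy3.1 c) (vrep2 h i (hy2.1 b)
    (vrep1 h i (hy1.1 a) hp)))

lemma edgeGroup2_le_K2 : edgeGroup2 ↥G ≤ K2 P G := by
  rw [edgeGroup2, Subgroup.closure_le]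
  rintro q ⟨g, rfl | rfl | rfl⟩
  · exact ⟨fun p hp => act_gg11 h G hG g hp,
      fun p hp => by
        have : (g,g,(1:↥G),(1:↥G))⁻¹ = (g⁻¹,g⁻¹,(1:↥G),(1:↥G)) := by
          simp [Prod.ext_iff]
        rw [this]; exact act_gg11 h G hG g⁻¹ hp⟩
  · exact ⟨fun p hp => act_g1g1 h G hG g hp,
      fun p hp => by
        have : (g,(1:↥G),g,(1:↥G))⁻¹ = (g⁻¹,(1:↥G),g⁻¹,(1:↥G)) := by
          simp [Prod.ext_iff]
        rw [this]; exact act_g1g1 h G hG g⁻¹ hp⟩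
  · exact ⟨fun p hp => act_diag h G hG g hp,
      fun p hp => by
        have : (g,g,g,g)⁻¹ = (g⁻¹,g⁻¹,g⁻¹,g⁻¹) := by simp [Prod.ext_iff]
        rw [this]; exact act_diag h G hG g⁻¹ hp⟩

include i in
lemma quadSub_le_K2 (F : Subgroup ↥G)
    (hF : ∀ g : ↥G, g ∈ F → (g : Equiv.Perm X) ∈ Sp P Q) :
    quadSub F ≤ K2 P G := by
  intro y hy
  obtain ⟨h1, h2, h3, h4⟩ : y.1 ∈ F ∧ y.2.1 ∈ F ∧ y.2.2.1 ∈ F ∧ y.2.2.2 ∈ F := by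
    exact ⟨hy.1, hy.2.1, hy.2.2.1, hy.2.2.2⟩
  refine ⟨fun p hp => act_vert h i G hG (hF _ h1) (hF _ h2) (hF _ h3) (hF _ h4) hp,
    fun p hp => act_vert h i G hG (hF _ (inv_mem h1)) (hF _ (inv_mem h2))
      (hF _ (inv_mem h3)) (hF _ (inv_mem h4)) hp⟩

/-- the image of `G^{[2,1]} F^{[2]}` is contained in `P` -/
lemma P_sup (F : Subgroup ↥G)
    (hF : ∀ g : ↥G, g ∈ F → (g : Equiv.Perm X) ∈ Sp P Q) :
    ∀ y ∈ (edgeGroup2 ↥G : Set (Quad ↥G)) * (quadSub F : Set (Quad ↥G)),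
      map4 (fun g : ↥G => (g : Equiv.Perm X) i) y ∈ P := by
  rintro y ⟨e, he, f, hf, rfl⟩
  have hy : e * f ∈ K2 P G :=
    (K2 P G).mul_mem (edgeGroup2_le_K2 h G hG he) (quadSub_le_K2 h i G hG F hF hf)
  have := hy.1 (i,i,i,i) (rrefl h i i)
  exact this

end Gp
end SP

namespace SP
variable {X : Type} {P : Set (Quad X)} {Q : Set (Cube X)}

section Psub
variable (h : IsStrongParallelepiped P Q) (i : X)
variable (G : Subgroup (Equiv.Perm X)) (hG : (G : Set (Equiv.Perm X)) ⊆ structSet P Q)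
variable (hFG : {g : Equiv.Perm X | ∃ w : Quad X, VerticalQ P i w ∧ ∀ x : X,
      actsRel P Q w x (g x)} ⊆ (G : Set (Equiv.Perm X)))
variable (htrans : ∀ x y : X, ∃ g ∈ G, g x = y)

include h i hG hFG htrans

lemma P_sub (Fsub : Subgroup ↥G)
    (hFc : (Fsub : Set ↥G) = {g : ↥G | ∃ w : Quad X,
      VerticalQ P i w ∧ ∀ x : X, actsRel P Q w x ((g : Equiv.Perm X) x)}) :
    ∀ p ∈ P, p ∈ map4 (fun g : ↥G => (g : Equiv.Perm X) i) ''
      ((edgeGroup2 ↥G : Set (Quad ↥G)) * (quadSub Fsub : Set (Quad ↥G))) := by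
  rintro ⟨a,b,c,d⟩ hp
  obtain ⟨g, hgG, hgi⟩ := htrans i a
  obtain ⟨e, heG, hei⟩ := htrans i (g⁻¹ b)
  obtain ⟨k, hkG, hki⟩ := htrans i (g⁻¹ c)
  -- the corner guess
  have hquad : (i, e i, k i, e (k i)) ∈ P := pg h (hG heG) i (k i)
  have hcc : g (k i) = c := by rw [hki, Equiv.Perm.apply_inv_self]
  have hP0 : (a, b, c, g (e (k i))) ∈ P := by
    have h2 := gP h (hG hgG) hquad
    rwa [hgi, hei, Equiv.Perm.apply_inv_self, hcc] at h2
  -- d and the corner guess lie in the same fiber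
  have sf1 : (i, d, i, g (e (k i))) ∈ P := by
    have h3 : (c, d, c, g (e (k i))) ∈ P := rtrans h (rsymm h hp) hP0
    exact rmid h (rtrans h (raa h i c) (rmid h h3))
  set m : Equiv.Perm X := g * e * k with hm
  have hmG : m ∈ G := G.mul_mem (G.mul_mem hgG heG) hkG
  have sf2 : (i, m⁻¹ d, i, m⁻¹ (g (e (k i)))) ∈ P :=
    sf_transport h i (hG (G.inv_mem hmG)) sf1
  have hcorner : m⁻¹ (g (e (k i))) = i := by
    have : m i = g (e (k i)) := rfl
    rw [← this, Equiv.Perm.inv_apply_self]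
  rw [hcorner] at sf2
  have hj : (i, i, i, m⁻¹ d) ∈ P := rsymm h sf2
  -- the fiber translation
  have huG : uPerm h hj ∈ G := hFG (uPerm_mem_set h i hj)
  set uu : ↥G := ⟨uPerm h hj, huG⟩ with huu
  have huF : uu ∈ Fsub := by
    have : uu ∈ (Fsub : Set ↥G) := by
      rw [hFc]
      exact ⟨(i,i,i,m⁻¹ d), uPerm_prop h hj⟩
    exact this
  set gg : ↥G := ⟨g, hgG⟩
  set ee : ↥G := ⟨e, heG⟩
  set kk : ↥G := ⟨k, hkG⟩
  refine ⟨(gg, gg*ee, gg*kk, gg*ee*kk*uu), ?_, ?_⟩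
  · have he2 : (gg, gg*ee, gg*kk, gg*ee*kk) ∈ edgeGroup2 ↥G := by
      have h1 : (gg,gg,gg,gg) ∈ edgeGroup2 ↥G :=
        Subgroup.subset_closure ⟨gg, Or.inr (Or.inr rfl)⟩
      have h2 : (ee,ee,ee,ee) ∈ edgeGroup2 ↥G :=
        Subgroup.subset_closure ⟨ee, Or.inr (Or.inr rfl)⟩
      have h3 : (ee⁻¹,(1:↥G),ee⁻¹,(1:↥G)) ∈ edgeGroup2 ↥G :=
        Subgroup.subset_closure ⟨ee⁻¹, Or.inr (Or.inl rfl)⟩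
      have h4 : (kk,kk,kk,kk) ∈ edgeGroup2 ↥G :=
        Subgroup.subset_closure ⟨kk, Or.inr (Or.inr rfl)⟩
      have h5 : (kk⁻¹,kk⁻¹,(1:↥G),(1:↥G)) ∈ edgeGroup2 ↥G :=
        Subgroup.subset_closure ⟨kk⁻¹, Or.inl rfl⟩
      have := mul_mem (mul_mem (mul_mem (mul_mem h1 h2) h3) h4) h5
      have heq : (gg,gg,gg,gg) * (ee,ee,ee,ee) * (ee⁻¹,(1:↥G),ee⁻¹,(1:↥G))
          * (kk,kk,kk,kk) * (kk⁻¹,kk⁻¹,(1:↥G),(1:↥G))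
          = (gg, gg*ee, gg*kk, gg*ee*kk) := by
        simp [Prod.ext_iff, mul_assoc]
      rwa [heq] at this
    have hf2 : ((1:↥G),(1:↥G),(1:↥G),uu) ∈ quadSub Fsub := by
      refine Subgroup.mem_prod.mpr ⟨one_mem _, Subgroup.mem_prod.mpr ⟨one_mem _,
        Subgroup.mem_prod.mpr ⟨one_mem _, huF⟩⟩⟩
    have := Set.mul_mem_mul he2 hf2
    have heq : (gg, gg*ee, gg*kk, gg*ee*kk) * ((1:↥G),(1:↥G),(1:↥G),uu)
        = (gg, gg*ee, gg*kk, gg*ee*kk*uu) := by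
      simp [Prod.ext_iff]
    rwa [heq] at this
  · have hui : uPerm h hj i = m⁻¹ d := uPerm_at_i h hj
    show ((gg : Equiv.Perm X) i, ((gg*ee : ↥G) : Equiv.Perm X) i,
      ((gg*kk : ↥G) : Equiv.Perm X) i, ((gg*ee*kk*uu : ↥G) : Equiv.Perm X) i)
      = (a,b,c,d)
    have e1 : ((gg*ee : ↥G) : Equiv.Perm X) i = b := by
      show g (e i) = b
      rw [hei, Equiv.Perm.apply_inv_self]
    have e2 : ((gg*kk : ↥G) : Equiv.Perm X) i = c := by
      show g (k i) = c
      rw [hki, Equiv.Perm.apply_inv_self]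
    have e3 : ((gg*ee*kk*uu : ↥G) : Equiv.Perm X) i = d := by
      show g (e (k (uPerm h hj i))) = d
      rw [hui]
      show (g * e * k) (m⁻¹ d) = d
      rw [← hm, Equiv.Perm.apply_inv_self]
    rw [e1, e2, e3, hgi]

end Psub
end SP

namespace SP
variable {X : Type} {P : Set (Quad X)} {Q : Set (Cube X)}

/-- coordinatewise application of a cube of elements of `G` -/
def ap3 (G : Subgroup (Equiv.Perm X)) (y : Cube ↥G) (q : Cube X) : Cube X :=
  fun v => (y v : Equiv.Perm X) (q v)

lemma ap3_mul (G : Subgroup (Equiv.Perm X)) (y z : Cube ↥G) (q : Cube X) :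
    ap3 G (y * z) q = ap3 G y (ap3 G z q) := rfl

lemma ap3_one (G : Subgroup (Equiv.Perm X)) (q : Cube X) : ap3 G 1 q = q := rfl

lemma cubeSym_cancel (σ : Equiv.Perm (Fin 3)) (c : Vtx) (v : Vtx) :
    cubeSym σ⁻¹ (fun k => c (σ⁻¹ k)) (cubeSym σ c v) = v := by
  funext k
  simp [cubeSym, Bool.xor_assoc]

/-- the subgroup of cubes acting on `Q` -/
def K3 (Q : Set (Cube X)) (G : Subgroup (Equiv.Perm X)) : Subgroup (Cube ↥G) where
  carrier := {y | (∀ q ∈ Q, ap3 G y q ∈ Q) ∧ (∀ q ∈ Q, ap3 G y⁻¹ q ∈ Q)}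
  one_mem' := ⟨fun q hq => by rwa [ap3_one], fun q hq => by rwa [inv_one, ap3_one]⟩
  mul_mem' := by
    rintro y z ⟨hy, hy'⟩ ⟨hz, hz'⟩
    refine ⟨fun q hq => ?_, fun q hq => ?_⟩
    · rw [ap3_mul]; exact hy _ (hz _ hq)
    · rw [mul_inv_rev, ap3_mul]; exact hz' _ (hy' _ hq)
  inv_mem' := by
    rintro y ⟨hy, hy'⟩
    exact ⟨hy', fun q hq => by rw [inv_inv]; exact hy _ hq⟩

lemma cubeElt_inv (G : Subgroup (Equiv.Perm X)) (α : Set Vtx) (g : ↥G) :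
    (cubeElt α g)⁻¹ = cubeElt α g⁻¹ := by
  funext v
  simp only [Pi.inv_apply, cubeElt, apply_ite (fun z : ↥G => z⁻¹), inv_one]

section Qact
variable (h : IsStrongParallelepiped P Q) (i : X)
variable (G : Subgroup (Equiv.Perm X)) (hG : (G : Set (Equiv.Perm X)) ⊆ structSet P Q)
include h hG

/-- symmetry transport of the action property -/
lemma act_transport {y : Cube ↥G} (hy : ∀ q ∈ Q, ap3 G y q ∈ Q)
    (σ : Equiv.Perm (Fin 3)) (c : Vtx) :
    ∀ q ∈ Q, ap3 G (fun v => y (cubeSym σ c v)) q ∈ Q := by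
  intro q hq
  have hq' : (fun v => q (cubeSym σ⁻¹ (fun k => c (σ⁻¹ k)) v)) ∈ Q :=
    qsym h σ⁻¹ _ hq
  have hA := hy _ hq'
  have h2 := qsym h σ c hA
  have heq : (fun v => ap3 G y (fun w => q (cubeSym σ⁻¹ (fun k => c (σ⁻¹ k)) w))
      (cubeSym σ c v)) = ap3 G (fun v => y (cubeSym σ c v)) q := by
    funext v
    show (y (cubeSym σ c v) : Equiv.Perm X) (q (cubeSym σ⁻¹ _ (cubeSym σ c v))) = _
    rw [cubeSym_cancel]
    rfl
  rwa [heq] at h2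

omit h hG in
lemma cube_eq_join (x : Cube X) :
    x = joinQuad (x ![false,false,false], x ![false,false,true],
        x ![false,true,false], x ![false,true,true])
      (x ![true,false,false], x ![true,false,true],
        x ![true,true,false], x ![true,true,true]) := by
  funext v
  rw [← vtx_eta v]
  rcases v 0 <;> rcases v 1 <;> rcases v 2 <;> rfl

omit h hG in
lemma face_eval0 (x : Cube X) : face x 0 false
    = (x ![false,false,false], x ![false,false,true],
       x ![false,true,false], x ![false,true,true]) := rfl

omit h hG in
lemma face_eval0t (x : Cube X) : face x 0 true
    = (x ![true,false,false], x ![true,false,true],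
       x ![true,true,false], x ![true,true,true]) := rfl

/-- action of a reference-face element -/
lemma act_face0 (g : ↥G) : ∀ q ∈ Q, ap3 G (cubeElt {v : Vtx | v 0 = false} g) q ∈ Q := by
  intro q hq
  have hp : (q ![false,false,false], q ![false,false,true],
      q ![false,true,false], q ![false,true,true]) ∈ P :=
    face_eval0 q ▸ qfaces h hq 0 false
  have hE : joinQuad (q ![false,false,false], q ![false,false,true],
        q ![false,true,false], q ![false,true,true])
      (q ![true,false,false], q ![true,false,true],
        q ![true,true,false], q ![true,true,true]) ∈ Q := by
    rw [← cube_eq_join]; exact hq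
  have heq : ap3 G (cubeElt {v : Vtx | v 0 = false} g) q
      = joinQuad ((g : Equiv.Perm X) (q ![false,false,false]),
          (g : Equiv.Perm X) (q ![false,false,true]),
          (g : Equiv.Perm X) (q ![false,true,false]),
          (g : Equiv.Perm X) (q ![false,true,true]))
        (q ![true,false,false], q ![true,false,true],
          q ![true,true,false], q ![true,true,true]) := by
    funext v
    rw [← vtx_eta v]
    rcases v 0 <;> rcases v 1 <;> rcases v 2 <;>
      simp [ap3, cubeElt, joinQuad, quadAt, Set.mem_setOf_eq]
  rw [heq]
  exact etrans h (gE (hG g.2) hp) hE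

/-- action of a reference-edge element -/
lemma act_edge01 {u : ↥G} (hu : (u : Equiv.Perm X) ∈ Sp P Q) :
    ∀ q ∈ Q, ap3 G (cubeElt {v : Vtx | v 0 = true ∧ v 1 = true} u) q ∈ Q := by
  intro q hq
  have hr : (q ![true,false,false], q ![true,false,true],
      q ![true,true,false], q ![true,true,true]) ∈ P :=
    face_eval0t q ▸ qfaces h hq 0 true
  have hE : joinQuad (q ![false,false,false], q ![false,false,true],
        q ![false,true,false], q ![false,true,true])
      (q ![true,false,false], q ![true,false,true],
        q ![true,true,false], q ![true,true,true]) ∈ Q := by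
    rw [← cube_eq_join]; exact hq
  -- VU step
  have U2 := m02 h (hu.2 (q ![true,true,false]) (q ![true,true,true]))
  have VU := rowcomp h (erefl h hr) U2
  have heq : ap3 G (cubeElt {v : Vtx | v 0 = true ∧ v 1 = true} u) q
      = joinQuad (q ![false,false,false], q ![false,false,true],
          q ![false,true,false], q ![false,true,true])
        (q ![true,false,false], q ![true,false,true],
          (u : Equiv.Perm X) (q ![true,true,false]),
          (u : Equiv.Perm X) (q ![true,true,true])) := by
    funext v
    rw [← vtx_eta v]
    rcases v 0 <;> rcases v 1 <;> rcases v 2 <;>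
      simp [ap3, cubeElt, joinQuad, quadAt, Set.mem_setOf_eq]
  rw [heq]
  exact etrans h hE VU

end Qact
end SP

namespace SP
variable {X : Type} {P : Set (Quad X)} {Q : Set (Cube X)}

section Qact2
variable (h : IsStrongParallelepiped P Q)
variable (G : Subgroup (Equiv.Perm X)) (hG : (G : Set (Equiv.Perm X)) ⊆ structSet P Q)
include h hG

lemma act_faceE (g : ↥G) {α : Set Vtx} (hα : IsFace3 α) :
    ∀ q ∈ Q, ap3 G (cubeElt α g) q ∈ Q := by
  obtain ⟨i0, b, rfl⟩ := hα
  have base := act_face0 h G hG g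
  fin_cases i0
  · have heq : (fun v => cubeElt {w : Vtx | w 0 = false} g (cubeSym pid3 ![b,false,false] v))
        = cubeElt {w : Vtx | w 0 = b} g := by
      funext v; rcases b <;> rw [← vtx_eta v] <;>
        rcases v 0 <;> rcases v 1 <;> rcases v 2 <;>
        simp [cubeElt, cubeSym, pid3, Set.mem_setOf_eq]
    intro q hq
    have := act_transport h G hG base pid3 ![b,false,false] q hq
    rwa [heq] at this
  · have heq : (fun v => cubeElt {w : Vtx | w 0 = false} g (cubeSym sw01 ![b,false,false] v))
        = cubeElt {w : Vtx | w 1 = b} g := by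
      funext v; rcases b <;> rw [← vtx_eta v] <;>
        rcases v 0 <;> rcases v 1 <;> rcases v 2 <;>
        simp [cubeElt, cubeSym, sw01, Set.mem_setOf_eq]
    intro q hq
    have := act_transport h G hG base sw01 ![b,false,false] q hq
    rwa [heq] at this
  · have heq : (fun v => cubeElt {w : Vtx | w 0 = false} g (cubeSym sw02 ![b,false,false] v))
        = cubeElt {w : Vtx | w 2 = b} g := by
      funext v; rcases b <;> rw [← vtx_eta v] <;>
        rcases v 0 <;> rcases v 1 <;> rcases v 2 <;>
        simp [cubeElt, cubeSym, sw02, Set.mem_setOf_eq]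
    intro q hq
    have := act_transport h G hG base sw02 ![b,false,false] q hq
    rwa [heq] at this

lemma act_edgeE {u : ↥G} (hu : (u : Equiv.Perm X) ∈ Sp P Q) {α : Set Vtx}
    (hα : IsEdge3 α) : ∀ q ∈ Q, ap3 G (cubeElt α u) q ∈ Q := by
  obtain ⟨i0, j0, b, c, hij, rfl⟩ := hα
  have base := act_edge01 h G hG hu
  fin_cases i0 <;> fin_cases j0
  · exact absurd rfl hij
  · have heq : (fun v => cubeElt {w : Vtx | w 0 = true ∧ w 1 = true} u
        (cubeSym pid3 ![!b,!c,false] v)) = cubeElt {w : Vtx | w 0 = b ∧ w 1 = c} u := by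
      funext v; rcases b <;> rcases c <;> rw [← vtx_eta v] <;>
        rcases v 0 <;> rcases v 1 <;> rcases v 2 <;>
        simp [cubeElt, cubeSym, pid3, Set.mem_setOf_eq]
    intro q hq
    have := act_transport h G hG base pid3 ![!b,!c,false] q hq
    rwa [heq] at this
  · have heq : (fun v => cubeElt {w : Vtx | w 0 = true ∧ w 1 = true} u
        (cubeSym sw12 ![!b,!c,false] v)) = cubeElt {w : Vtx | w 0 = b ∧ w 2 = c} u := by
      funext v; rcases b <;> rcases c <;> rw [← vtx_eta v] <;>
        rcases v 0 <;> rcases v 1 <;> rcases v 2 <;>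
        simp [cubeElt, cubeSym, sw12, Set.mem_setOf_eq]
    intro q hq
    have := act_transport h G hG base sw12 ![!b,!c,false] q hq
    rwa [heq] at this
  · have heq : (fun v => cubeElt {w : Vtx | w 0 = true ∧ w 1 = true} u
        (cubeSym sw01 ![!b,!c,false] v)) = cubeElt {w : Vtx | w 1 = b ∧ w 0 = c} u := by
      funext v; rcases b <;> rcases c <;> rw [← vtx_eta v] <;>
        rcases v 0 <;> rcases v 1 <;> rcases v 2 <;>
        simp [cubeElt, cubeSym, sw01, Set.mem_setOf_eq]
    intro q hq
    have := act_transport h G hG base sw01 ![!b,!c,false] q hq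
    rwa [heq] at this
  · exact absurd rfl hij
  · have heq : (fun v => cubeElt {w : Vtx | w 0 = true ∧ w 1 = true} u
        (cubeSym p120 ![!b,!c,false] v)) = cubeElt {w : Vtx | w 1 = b ∧ w 2 = c} u := by
      funext v; rcases b <;> rcases c <;> rw [← vtx_eta v] <;>
        rcases v 0 <;> rcases v 1 <;> rcases v 2 <;>
        simp [cubeElt, cubeSym, p120, Set.mem_setOf_eq]
    intro q hq
    have := act_transport h G hG base p120 ![!b,!c,false] q hq
    rwa [heq] at this
  · have heq : (fun v => cubeElt {w : Vtx | w 0 = true ∧ w 1 = true} u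
        (cubeSym p201 ![!b,!c,false] v)) = cubeElt {w : Vtx | w 2 = b ∧ w 0 = c} u := by
      funext v; rcases b <;> rcases c <;> rw [← vtx_eta v] <;>
        rcases v 0 <;> rcases v 1 <;> rcases v 2 <;>
        simp [cubeElt, cubeSym, p201, Set.mem_setOf_eq]
    intro q hq
    have := act_transport h G hG base p201 ![!b,!c,false] q hq
    rwa [heq] at this
  · have heq : (fun v => cubeElt {w : Vtx | w 0 = true ∧ w 1 = true} u
        (cubeSym sw02 ![!b,!c,false] v)) = cubeElt {w : Vtx | w 2 = b ∧ w 1 = c} u := by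
      funext v; rcases b <;> rcases c <;> rw [← vtx_eta v] <;>
        rcases v 0 <;> rcases v 1 <;> rcases v 2 <;>
        simp [cubeElt, cubeSym, sw02, Set.mem_setOf_eq]
    intro q hq
    have := act_transport h G hG base sw02 ![!b,!c,false] q hq
    rwa [heq] at this
  · exact absurd rfl hij

end Qact2
end SP

namespace SP
variable {X : Type} {P : Set (Quad X)} {Q : Set (Cube X)}

section Qsup
variable (h : IsStrongParallelepiped P Q) (i : X)
variable (G : Subgroup (Equiv.Perm X)) (hG : (G : Set (Equiv.Perm X)) ⊆ structSet P Q)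
include h hG

lemma faceGroup_le_K3 : faceGroup ↥G ≤ K3 Q G := by
  rw [faceGroup, Subgroup.closure_le]
  rintro x ⟨g, α, hα, rfl⟩
  refine ⟨act_faceE h G hG g hα, fun q hq => ?_⟩
  rw [cubeElt_inv]
  exact act_faceE h G hG g⁻¹ hα q hq

include i in
lemma edgeGroup3_le_K3 (Fsub : Subgroup ↥G)
    (hF : ∀ g : ↥G, g ∈ Fsub → (g : Equiv.Perm X) ∈ Sp P Q) :
    edgeGroup3 Fsub ≤ K3 Q G := by
  rw [edgeGroup3, Subgroup.closure_le]
  rintro x ⟨u, huF, α, hα, rfl⟩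
  refine ⟨act_edgeE h G hG (hF u huF) hα, fun q hq => ?_⟩
  rw [cubeElt_inv]
  have : ((u⁻¹ : ↥G) : Equiv.Perm X) ∈ Sp P Q := by
    have := Sp_inv h i (hF u huF)
    simpa using this
  exact act_edgeE h G hG this hα q hq

omit hG in
lemma const_mem_Q : (fun _ : Vtx => i) ∈ Q := by
  have h1 := erefl h (rrefl h i i)
  have heq : joinQuad ((i:X),i,i,i) (i,i,i,i) = fun _ : Vtx => i := by
    funext v; rw [← vtx_eta v]
    rcases v 0 <;> rcases v 1 <;> rcases v 2 <;> rfl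
  rwa [heq] at h1

include i in
lemma Q_sup (Fsub : Subgroup ↥G)
    (hF : ∀ g : ↥G, g ∈ Fsub → (g : Equiv.Perm X) ∈ Sp P Q) :
    ∀ y ∈ (faceGroup ↥G : Set (Cube ↥G)) * (edgeGroup3 Fsub : Set (Cube ↥G)),
      mapCube (fun g : ↥G => (g : Equiv.Perm X) i) y ∈ Q := by
  rintro y ⟨f, hf, e, he, rfl⟩
  have hy : f * e ∈ K3 Q G :=
    (K3 Q G).mul_mem (faceGroup_le_K3 h G hG hf) (edgeGroup3_le_K3 h i G hG Fsub hF he)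
  exact hy.1 (fun _ => i) (const_mem_Q h i)

end Qsup
end SP

namespace SP
variable {X : Type} {P : Set (Quad X)} {Q : Set (Cube X)}

lemma face_eval1 (x : Cube X) : face x 1 false
    = (x ![false,false,false], x ![false,false,true],
       x ![true,false,false], x ![true,false,true]) := rfl

lemma face_eval2 (x : Cube X) : face x 2 false
    = (x ![false,false,false], x ![false,true,false],
       x ![true,false,false], x ![true,true,false]) := rfl

section Qsub
variable (h : IsStrongParallelepiped P Q) (i : X)
variable (G : Subgroup (Equiv.Perm X)) (hG : (G : Set (Equiv.Perm X)) ⊆ structSet P Q)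
variable (hFG : {g : Equiv.Perm X | ∃ w : Quad X, VerticalQ P i w ∧ ∀ x : X,
      actsRel P Q w x (g x)} ⊆ (G : Set (Equiv.Perm X)))
variable (htrans : ∀ x y : X, ∃ g ∈ G, g x = y)
include h i hG

lemma corner_vert {a b c d : X} (hp : (a,b,c,d) ∈ P) {g e k : Equiv.Perm X}
    (hgG : g ∈ G) (heG : e ∈ G) (hkG : k ∈ G)
    (hgi : g i = a) (hei : e i = g⁻¹ b) (hki : k i = g⁻¹ c) :
    (i, i, i, (g*e*k)⁻¹ d) ∈ P := by
  have hquad : (i, e i, k i, e (k i)) ∈ P := pg h (hG heG) i (k i)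
  have hcc : g (k i) = c := by rw [hki, Equiv.Perm.apply_inv_self]
  have hP0 : (a, b, c, g (e (k i))) ∈ P := by
    have h2 := gP h (hG hgG) hquad
    rwa [hgi, hei, Equiv.Perm.apply_inv_self, hcc] at h2
  have sf1 : (i, d, i, g (e (k i))) ∈ P := by
    have h3 : (c, d, c, g (e (k i))) ∈ P := rtrans h (rsymm h hp) hP0
    exact rmid h (rtrans h (raa h i c) (rmid h h3))
  have hmG : g * e * k ∈ G := G.mul_mem (G.mul_mem hgG heG) hkG
  have sf2 : (i, (g*e*k)⁻¹ d, i, (g*e*k)⁻¹ (g (e (k i)))) ∈ P :=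
    sf_transport h i (hG (G.inv_mem hmG)) sf1
  have hcorner : (g*e*k)⁻¹ (g (e (k i))) = i := by
    have hmi : (g*e*k) i = g (e (k i)) := rfl
    rw [← hmi, Equiv.Perm.inv_apply_self]
  rw [hcorner] at sf2
  exact rsymm h sf2

include hFG htrans in
lemma Q_sub (Fsub : Subgroup ↥G)
    (hFc : (Fsub : Set ↥G) = {g : ↥G | ∃ w : Quad X,
      VerticalQ P i w ∧ ∀ x : X, actsRel P Q w x ((g : Equiv.Perm X) x)})
    (hF : ∀ g : ↥G, g ∈ Fsub → (g : Equiv.Perm X) ∈ Sp P Q) :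
    ∀ q ∈ Q, q ∈ mapCube (fun g : ↥G => (g : Equiv.Perm X) i) ''
      ((faceGroup ↥G : Set (Cube ↥G)) * (edgeGroup3 Fsub : Set (Cube ↥G))) := by
  intro q hq
  obtain ⟨g, hgG, hgi⟩ := htrans i (q ![false,false,false])
  obtain ⟨e, heG, hei⟩ := htrans i (g⁻¹ (q ![false,false,true]))
  obtain ⟨k, hkG, hki⟩ := htrans i (g⁻¹ (q ![false,true,false]))
  obtain ⟨m, hmG, hmi⟩ := htrans i (g⁻¹ (q ![true,false,false]))
  have hf0 : (q ![false,false,false], q ![false,false,true],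
      q ![false,true,false], q ![false,true,true]) ∈ P :=
    face_eval0 q ▸ qfaces h hq 0 false
  have hf1 : (q ![false,false,false], q ![false,false,true],
      q ![true,false,false], q ![true,false,true]) ∈ P :=
    face_eval1 q ▸ qfaces h hq 1 false
  have hf2 : (q ![false,false,false], q ![false,true,false],
      q ![true,false,false], q ![true,true,false]) ∈ P :=
    face_eval2 q ▸ qfaces h hq 2 false
  have hj1 : (i,i,i,(g*e*k)⁻¹ (q ![false,true,true])) ∈ P :=
    corner_vert h i G hG hf0 hgG heG hkG hgi hei hki
  have hj2 : (i,i,i,(g*e*m)⁻¹ (q ![true,false,true])) ∈ P :=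
    corner_vert h i G hG hf1 hgG heG hmG hgi hei hmi
  have hj3 : (i,i,i,(g*k*m)⁻¹ (q ![true,true,false])) ∈ P :=
    corner_vert h i G hG hf2 hgG hkG hmG hgi hki hmi
  set gg : ↥G := ⟨g, hgG⟩ with hgg
  set ee : ↥G := ⟨e, heG⟩ with hee
  set kk : ↥G := ⟨k, hkG⟩ with hkk
  set mm : ↥G := ⟨m, hmG⟩ with hmm
  set uu1 : ↥G := ⟨uPerm h hj1, hFG (uPerm_mem_set h i hj1)⟩ with huu1
  set uu2 : ↥G := ⟨uPerm h hj2, hFG (uPerm_mem_set h i hj2)⟩ with huu2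
  set uu3 : ↥G := ⟨uPerm h hj3, hFG (uPerm_mem_set h i hj3)⟩ with huu3
  have hu1F : uu1 ∈ Fsub := by
    have : uu1 ∈ (Fsub : Set ↥G) := by rw [hFc]; exact ⟨_, uPerm_prop h hj1⟩
    exact this
  have hu2F : uu2 ∈ Fsub := by
    have : uu2 ∈ (Fsub : Set ↥G) := by rw [hFc]; exact ⟨_, uPerm_prop h hj2⟩
    exact this
  have hu3F : uu3 ∈ Fsub := by
    have : uu3 ∈ (Fsub : Set ↥G) := by rw [hFc]; exact ⟨_, uPerm_prop h hj3⟩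
    exact this
  set xx : Cube ↥G :=
    cubeElt {w : Vtx | w 0 = false} gg * cubeElt {w : Vtx | w 0 = true} gg *
    cubeElt {w : Vtx | w 2 = true} ee * cubeElt {w : Vtx | w 1 = true} kk *
    cubeElt {w : Vtx | w 0 = true} mm *
    cubeElt {w : Vtx | w 1 = true ∧ w 2 = true} uu1 *
    cubeElt {w : Vtx | w 0 = true ∧ w 2 = true} uu2 *
    cubeElt {w : Vtx | w 0 = true ∧ w 1 = true} uu3 with hxx
  have hfmem : cubeElt {w : Vtx | w 0 = false} gg * cubeElt {w : Vtx | w 0 = true} gg *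
      cubeElt {w : Vtx | w 2 = true} ee * cubeElt {w : Vtx | w 1 = true} kk *
      cubeElt {w : Vtx | w 0 = true} mm ∈ faceGroup ↥G := by
    have m1 : cubeElt {w : Vtx | w 0 = false} gg ∈ faceGroup ↥G :=
      Subgroup.subset_closure ⟨gg, _, ⟨0, false, rfl⟩, rfl⟩
    have m2 : cubeElt {w : Vtx | w 0 = true} gg ∈ faceGroup ↥G :=
      Subgroup.subset_closure ⟨gg, _, ⟨0, true, rfl⟩, rfl⟩
    have m3 : cubeElt {w : Vtx | w 2 = true} ee ∈ faceGroup ↥G :=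
      Subgroup.subset_closure ⟨ee, _, ⟨2, true, rfl⟩, rfl⟩
    have m4 : cubeElt {w : Vtx | w 1 = true} kk ∈ faceGroup ↥G :=
      Subgroup.subset_closure ⟨kk, _, ⟨1, true, rfl⟩, rfl⟩
    have m5 : cubeElt {w : Vtx | w 0 = true} mm ∈ faceGroup ↥G :=
      Subgroup.subset_closure ⟨mm, _, ⟨0, true, rfl⟩, rfl⟩
    exact mul_mem (mul_mem (mul_mem (mul_mem m1 m2) m3) m4) m5
  have hemem : cubeElt {w : Vtx | w 1 = true ∧ w 2 = true} uu1 *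
      cubeElt {w : Vtx | w 0 = true ∧ w 2 = true} uu2 *
      cubeElt {w : Vtx | w 0 = true ∧ w 1 = true} uu3 ∈ edgeGroup3 Fsub := by
    have m1 : cubeElt {w : Vtx | w 1 = true ∧ w 2 = true} uu1 ∈ edgeGroup3 Fsub :=
      Subgroup.subset_closure ⟨uu1, hu1F, _, ⟨1, 2, true, true, by decide, rfl⟩, rfl⟩
    have m2 : cubeElt {w : Vtx | w 0 = true ∧ w 2 = true} uu2 ∈ edgeGroup3 Fsub :=
      Subgroup.subset_closure ⟨uu2, hu2F, _, ⟨0, 2, true, true, by decide, rfl⟩, rfl⟩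
    have m3 : cubeElt {w : Vtx | w 0 = true ∧ w 1 = true} uu3 ∈ edgeGroup3 Fsub :=
      Subgroup.subset_closure ⟨uu3, hu3F, _, ⟨0, 1, true, true, by decide, rfl⟩, rfl⟩
    exact mul_mem (mul_mem m1 m2) m3
  have hmem : xx ∈ (faceGroup ↥G : Set (Cube ↥G)) * (edgeGroup3 Fsub : Set (Cube ↥G)) := by
    have hsplit : xx = (cubeElt {w : Vtx | w 0 = false} gg *
        cubeElt {w : Vtx | w 0 = true} gg * cubeElt {w : Vtx | w 2 = true} ee *
        cubeElt {w : Vtx | w 1 = true} kk * cubeElt {w : Vtx | w 0 = true} mm) *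
        (cubeElt {w : Vtx | w 1 = true ∧ w 2 = true} uu1 *
         cubeElt {w : Vtx | w 0 = true ∧ w 2 = true} uu2 *
         cubeElt {w : Vtx | w 0 = true ∧ w 1 = true} uu3) := by
      rw [hxx]; simp [mul_assoc]
    rw [hsplit]
    exact Set.mul_mem_mul hfmem hemem
  refine ⟨xx, hmem, ?_⟩
  have c000 : mapCube (fun g : ↥G => (g : Equiv.Perm X) i) xx ![false,false,false]
      = q ![false,false,false] := by
    have hx : xx ![false,false,false] = gg := by rw [hxx]; simp [cubeElt]
    show ((xx ![false,false,false] : ↥G) : Equiv.Perm X) i = _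
    rw [hx]; exact hgi
  have c001 : mapCube (fun g : ↥G => (g : Equiv.Perm X) i) xx ![false,false,true]
      = q ![false,false,true] := by
    have hx : xx ![false,false,true] = gg * ee := by rw [hxx]; simp [cubeElt]
    show ((xx ![false,false,true] : ↥G) : Equiv.Perm X) i = _
    rw [hx]
    show g (e i) = _
    rw [hei, Equiv.Perm.apply_inv_self]
  have c010 : mapCube (fun g : ↥G => (g : Equiv.Perm X) i) xx ![false,true,false]
      = q ![false,true,false] := by
    have hx : xx ![false,true,false] = gg * kk := by rw [hxx]; simp [cubeElt]
    show ((xx ![false,true,false] : ↥G) : Equiv.Perm X) i = _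
    rw [hx]
    show g (k i) = _
    rw [hki, Equiv.Perm.apply_inv_self]
  have c011 : mapCube (fun g : ↥G => (g : Equiv.Perm X) i) xx ![false,true,true]
      = q ![false,true,true] := by
    have hx : xx ![false,true,true] = gg * ee * kk * uu1 := by rw [hxx]; simp [cubeElt]
    show ((xx ![false,true,true] : ↥G) : Equiv.Perm X) i = _
    rw [hx]
    show g (e (k (uPerm h hj1 i))) = _
    rw [uPerm_at_i h hj1]
    exact Equiv.Perm.apply_inv_self (g*e*k) (q ![false,true,true])
  have c100 : mapCube (fun g : ↥G => (g : Equiv.Perm X) i) xx ![true,false,false]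
      = q ![true,false,false] := by
    have hx : xx ![true,false,false] = gg * mm := by rw [hxx]; simp [cubeElt]
    show ((xx ![true,false,false] : ↥G) : Equiv.Perm X) i = _
    rw [hx]
    show g (m i) = _
    rw [hmi, Equiv.Perm.apply_inv_self]
  have c101 : mapCube (fun g : ↥G => (g : Equiv.Perm X) i) xx ![true,false,true]
      = q ![true,false,true] := by
    have hx : xx ![true,false,true] = gg * ee * mm * uu2 := by rw [hxx]; simp [cubeElt]
    show ((xx ![true,false,true] : ↥G) : Equiv.Perm X) i = _
    rw [hx]
    show g (e (m (uPerm h hj2 i))) = _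
    rw [uPerm_at_i h hj2]
    exact Equiv.Perm.apply_inv_self (g*e*m) (q ![true,false,true])
  have c110 : mapCube (fun g : ↥G => (g : Equiv.Perm X) i) xx ![true,true,false]
      = q ![true,true,false] := by
    have hx : xx ![true,true,false] = gg * kk * mm * uu3 := by rw [hxx]; simp [cubeElt]
    show ((xx ![true,true,false] : ↥G) : Equiv.Perm X) i = _
    rw [hx]
    show g (k (m (uPerm h hj3 i))) = _
    rw [uPerm_at_i h hj3]
    exact Equiv.Perm.apply_inv_self (g*k*m) (q ![true,true,false])
  have hY : mapCube (fun g : ↥G => (g : Equiv.Perm X) i) xx ∈ Q :=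
    Q_sup h i G hG Fsub hF _ hmem
  have hYj := cube_eq_join (mapCube (fun g : ↥G => (g : Equiv.Perm X) i) xx)
  rw [c000, c001, c010, c011, c100, c101, c110] at hYj
  rw [hYj] at hY
  have hqj := cube_eq_join q
  have hq2 : joinQuad (q ![false,false,false], q ![false,false,true],
      q ![false,true,false], q ![false,true,true])
      (q ![true,false,false], q ![true,false,true],
      q ![true,true,false], q ![true,true,true]) ∈ Q := by rw [← hqj]; exact hq
  have h111 : mapCube (fun g : ↥G => (g : Equiv.Perm X) i) xx ![true,true,true]
      = q ![true,true,true] := euniq h hY hq2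
  rw [h111] at hYj
  exact hYj.trans hqj.symm

end Qsub
end SP

/-- (Structure theorem.) Let `(P, Q)` be a strong parallelepiped structure
on `X`, `G` a subgroup of the structure group containing the fiber group `F` (acting as the
permutations `x ↦ u·x`) and acting transitively on `X`, and let `i ∈ X`.  Then, with `Fsub`
the copy of `F` inside `G`, one has `G₂ ⊆ F ⊆ Z(G)`, the stabilizer `Γ` of `i` meets `F`
trivially, and under the identification `G/Γ ≅ X`, `g·Γ ↦ g·i`, the structure `(P, Q)`
coincides with the nilparallelepiped structure associated to `G`, `F` and `Γ`:
`P` and `Q` are the images of `G^{[2,1]}·F^{[2]}` and `G^{[3,2]}·F^{[3,1]}` under `g ↦ g·i`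
applied coordinatewise. -/
theorem structure_theorem (X : Type) [Nonempty X]
    (P : Set (Quad X)) (Q : Set (Cube X)) (h : IsStrongParallelepiped P Q) (i : X)
    (G : Subgroup (Equiv.Perm X))
    (hG : (G : Set (Equiv.Perm X)) ⊆ structSet P Q)
    (hFG : {g : Equiv.Perm X | ∃ w : Quad X, VerticalQ P i w ∧ ∀ x : X,
      actsRel P Q w x (g x)} ⊆ (G : Set (Equiv.Perm X)))
    (htrans : ∀ x y : X, ∃ g ∈ G, g x = y) :
    (∃ Fsub : Subgroup ↥G, (Fsub : Set ↥G) = {g : ↥G | ∃ w : Quad X,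
      VerticalQ P i w ∧ ∀ x : X, actsRel P Q w x ((g : Equiv.Perm X) x)}) ∧
    (∀ Fsub : Subgroup ↥G, (Fsub : Set ↥G) = {g : ↥G | ∃ w : Quad X,
        VerticalQ P i w ∧ ∀ x : X, actsRel P Q w x ((g : Equiv.Perm X) x)} →
      commutator ↥G ≤ Fsub ∧
      Fsub ≤ Subgroup.center ↥G ∧
      (∀ g : ↥G, g ∈ Fsub → (g : Equiv.Perm X) i = i → g = 1) ∧
      P = map4 (fun g : ↥G => (g : Equiv.Perm X) i) ''
        ((edgeGroup2 ↥G : Set (Quad ↥G)) * (quadSub Fsub : Set (Quad ↥G))) ∧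
      Q = mapCube (fun g : ↥G => (g : Equiv.Perm X) i) ''
        ((faceGroup ↥G : Set (Cube ↥G)) * (edgeGroup3 Fsub : Set (Cube ↥G)))) := by
  constructor
  · -- the fiber set is a subgroup
    refine ⟨{ carrier := {g : ↥G | ∃ w : Quad X,
        VerticalQ P i w ∧ ∀ x : X, actsRel P Q w x ((g : Equiv.Perm X) x)}
              one_mem' := ?_
              mul_mem' := ?_
              inv_mem' := ?_ }, rfl⟩
    · intro a b ha hb
      show ((a*b : ↥G) : Equiv.Perm X) ∈ {g : Equiv.Perm X | ∃ w : Quad X,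
        VerticalQ P i w ∧ ∀ x : X, actsRel P Q w x (g x)}
      rw [MulMemClass.coe_mul]
      exact (SP.mem_Sp_iff h i).mpr (SP.Sp_mul h i
        ((SP.mem_Sp_iff h i).mp ha) ((SP.mem_Sp_iff h i).mp hb))
    · show ((1:↥G) : Equiv.Perm X) ∈ {g : Equiv.Perm X | ∃ w : Quad X,
        VerticalQ P i w ∧ ∀ x : X, actsRel P Q w x (g x)}
      rw [OneMemClass.coe_one]
      exact (SP.mem_Sp_iff h i).mpr (SP.Sp_one h i)
    · intro a ha
      show ((a⁻¹ : ↥G) : Equiv.Perm X) ∈ {g : Equiv.Perm X | ∃ w : Quad X,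
        VerticalQ P i w ∧ ∀ x : X, actsRel P Q w x (g x)}
      rw [InvMemClass.coe_inv]
      exact (SP.mem_Sp_iff h i).mpr (SP.Sp_inv h i ((SP.mem_Sp_iff h i).mp ha))
  · intro Fsub hFc
    have hmem : ∀ g : ↥G, g ∈ Fsub ↔ (g : Equiv.Perm X) ∈ SP.Sp P Q := by
      intro g
      constructor
      · intro hg
        have : g ∈ (Fsub : Set ↥G) := hg
        rw [hFc] at this
        exact (SP.mem_Sp_iff h i).mp this
      · intro hg
        have : g ∈ (Fsub : Set ↥G) := by
          rw [hFc]; exact (SP.mem_Sp_iff h i).mpr hg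
        exact this
    refine ⟨?_, ?_, ?_, ?_, ?_⟩
    · -- commutator
      rw [commutator_def, Subgroup.commutator_le]
      intro a _ b _
      refine (hmem _).mpr ?_
      have hco : ((⁅a,b⁆ : ↥G) : Equiv.Perm X)
          = (a : Equiv.Perm X) * (b : Equiv.Perm X)
            * (a : Equiv.Perm X)⁻¹ * (b : Equiv.Perm X)⁻¹ := by
        simp [commutatorElement_def]
      rw [hco]
      exact SP.Sp_comm h i (hG a.2) (hG b.2)
    · -- centrality
      intro u hu
      rw [Subgroup.mem_center_iff]
      intro g
      have key := SP.Sp_central h i (hG g.2) ((hmem u).mp hu)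
      refine Subtype.ext (Equiv.ext fun y => ?_)
      show (g : Equiv.Perm X) ((u : Equiv.Perm X) y)
        = (u : Equiv.Perm X) ((g : Equiv.Perm X) y)
      exact key y
    · -- trivial stabilizer intersection
      intro g hgF hgi
      have hu := (hmem g).mp hgF
      have hfix : ∀ x : X, (g : Equiv.Perm X) x = x := by
        intro x
        have E1 := hu.2 x i
        rw [hgi] at E1
        have E2 := SP.pairTriv h (SP.raa h x i)
        exact SP.euniq h (SP.esymm h E1) (SP.esymm h E2)
      exact Subtype.ext (Equiv.ext hfix)
    · -- P equality
      refine Set.Subset.antisymm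
        (fun p hp => SP.P_sub h i G hG hFG htrans Fsub hFc p hp) ?_
      rintro _ ⟨y, hy, rfl⟩
      exact SP.P_sup h i G hG Fsub (fun g hg => (hmem g).mp hg) y hy
    · -- Q equality
      refine Set.Subset.antisymm
        (fun q hq => SP.Q_sub h i G hG hFG htrans Fsub hFc
          (fun g hg => (hmem g).mp hg) q hq) ?_
      rintro _ ⟨y, hy, rfl⟩
      exact SP.Q_sup h i G hG Fsub (fun g hg => (hmem g).mp hg) y hy

end HK
end

section
/- Let (𝒫,𝒬) be a strong parallelepiped structure on a nonempty set X, with base B, fiber group F, and structure group 𝒢. Then 𝒢 acts transitively on X if and only if for every s ∈ B the exact sequence 0 → F → P_s → B → 0 splits, i.e. there exists a group homomorphism φ: B → P_s with q_s ∘ φ = id_B. -/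
open scoped Pointwise

namespace HK

variable {X Y : Type}

section Aux

variable {X : Type} {P : Set (Quad X)} {Q : Set (Cube X)}

private lemma aux_prefl (hP : IsWeakParallelogram P) (a b : X) : (a, b, a, b) ∈ P := hP.1 a b

private lemma aux_psymm (hP : IsWeakParallelogram P) {a b c d : X} (h : (a, b, c, d) ∈ P) :
    (c, d, a, b) ∈ P := hP.2.1 a b c d h

private lemma aux_ptrans (hP : IsWeakParallelogram P) {a b c d e f : X}
    (h1 : (a, b, c, d) ∈ P) (h2 : (c, d, e, f) ∈ P) : (a, b, e, f) ∈ P :=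
  hP.2.2.1 a b c d e f h1 h2

private lemma aux_pswap (hP : IsWeakParallelogram P) {a b c d : X} (h : (a, b, c, d) ∈ P) :
    (a, c, b, d) ∈ P := hP.2.2.2.1 a b c d h

private lemma aux_pcomplete (hP : IsWeakParallelogram P) (a b c : X) : ∃ d, (a, b, c, d) ∈ P :=
  hP.2.2.2.2 a b c

private lemma aux_prev (hP : IsWeakParallelogram P) {a b c d : X} (h : (a, b, c, d) ∈ P) :
    (b, a, d, c) ∈ P := aux_pswap hP (aux_psymm hP (aux_pswap hP h))

private lemma aux_ppair (hP : IsWeakParallelogram P) (a b : X) : (a, a, b, b) ∈ P :=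
  aux_pswap hP (aux_prefl hP a b)

private lemma aux_qrefl (hQ : IsWeakParallelepiped P Q) {p : Quad X} (h : p ∈ P) :
    joinQuad p p ∈ Q := hQ.2.2.2.1 p h

private lemma aux_qsymm (hQ : IsWeakParallelepiped P Q) {p q : Quad X}
    (h : joinQuad p q ∈ Q) : joinQuad q p ∈ Q := hQ.2.2.2.2.1 p q h

private lemma aux_qtrans (hQ : IsWeakParallelepiped P Q) {p q r : Quad X}
    (h1 : joinQuad p q ∈ Q) (h2 : joinQuad q r ∈ Q) : joinQuad p r ∈ Q :=
  hQ.2.2.2.2.2.1 p q r h1 h2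

private lemma aux_s01 (hQ : IsWeakParallelepiped P Q) {a b c d e f g h : X}
    (H : joinQuad (a, b, c, d) (e, f, g, h) ∈ Q) :
    joinQuad (a, b, e, f) (c, d, g, h) ∈ Q := by
  have H2 := hQ.2.2.1 (Equiv.swap 0 1) (fun _ => false) _ H
  have hk : (fun v => joinQuad (a, b, c, d) (e, f, g, h)
      (cubeSym (Equiv.swap 0 1) (fun _ => false) v)) = joinQuad (a, b, e, f) (c, d, g, h) := by
    funext v
    have w0 : cubeSym (Equiv.swap 0 1) (fun _ => false) v 0 = v 1 := by simp [cubeSym]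
    have w1 : cubeSym (Equiv.swap 0 1) (fun _ => false) v 1 = v 0 := by simp [cubeSym]
    have w2 : cubeSym (Equiv.swap 0 1) (fun _ => false) v 2 = v 2 := by
      simp [cubeSym, Equiv.swap_apply_of_ne_of_ne (show (2 : Fin 3) ≠ 0 by decide)
        (show (2 : Fin 3) ≠ 1 by decide)]
    cases h0 : v 0 <;> cases h1 : v 1 <;> cases h2 : v 2 <;>
      simp [joinQuad, quadAt, w0, w1, w2, h0, h1, h2]
  rwa [hk] at H2

private lemma aux_s02 (hQ : IsWeakParallelepiped P Q) {a b c d e f g h : X}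
    (H : joinQuad (a, b, c, d) (e, f, g, h) ∈ Q) :
    joinQuad (a, e, c, g) (b, f, d, h) ∈ Q := by
  have H2 := hQ.2.2.1 (Equiv.swap 0 2) (fun _ => false) _ H
  have hk : (fun v => joinQuad (a, b, c, d) (e, f, g, h)
      (cubeSym (Equiv.swap 0 2) (fun _ => false) v)) = joinQuad (a, e, c, g) (b, f, d, h) := by
    funext v
    have w0 : cubeSym (Equiv.swap 0 2) (fun _ => false) v 0 = v 2 := by simp [cubeSym]
    have w2 : cubeSym (Equiv.swap 0 2) (fun _ => false) v 2 = v 0 := by simp [cubeSym]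
    have w1 : cubeSym (Equiv.swap 0 2) (fun _ => false) v 1 = v 1 := by
      simp [cubeSym, Equiv.swap_apply_of_ne_of_ne (show (1 : Fin 3) ≠ 0 by decide)
        (show (1 : Fin 3) ≠ 2 by decide)]
    cases h0 : v 0 <;> cases h1 : v 1 <;> cases h2 : v 2 <;>
      simp [joinQuad, quadAt, w0, w1, w2, h0, h1, h2]
  rwa [hk] at H2

private lemma aux_s12 (hQ : IsWeakParallelepiped P Q) {a b c d e f g h : X}
    (H : joinQuad (a, b, c, d) (e, f, g, h) ∈ Q) :
    joinQuad (a, c, b, d) (e, g, f, h) ∈ Q := by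
  have H2 := hQ.2.2.1 (Equiv.swap 1 2) (fun _ => false) _ H
  have hk : (fun v => joinQuad (a, b, c, d) (e, f, g, h)
      (cubeSym (Equiv.swap 1 2) (fun _ => false) v)) = joinQuad (a, c, b, d) (e, g, f, h) := by
    funext v
    have w1 : cubeSym (Equiv.swap 1 2) (fun _ => false) v 1 = v 2 := by simp [cubeSym]
    have w2 : cubeSym (Equiv.swap 1 2) (fun _ => false) v 2 = v 1 := by simp [cubeSym]
    have w0 : cubeSym (Equiv.swap 1 2) (fun _ => false) v 0 = v 0 := by
      simp [cubeSym, Equiv.swap_apply_of_ne_of_ne (show (0 : Fin 3) ≠ 1 by decide)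
        (show (0 : Fin 3) ≠ 2 by decide)]
    cases h0 : v 0 <;> cases h1 : v 1 <;> cases h2 : v 2 <;>
      simp [joinQuad, quadAt, w0, w1, w2, h0, h1, h2]
  rwa [hk] at H2

private lemma aux_flip1 (hQ : IsWeakParallelepiped P Q) {a b c d e f g h : X}
    (H : joinQuad (a, b, c, d) (e, f, g, h) ∈ Q) :
    joinQuad (c, d, a, b) (g, h, e, f) ∈ Q := by
  have H2 := hQ.2.2.1 1 (fun j => decide (j = 1)) _ H
  have hk : (fun v => joinQuad (a, b, c, d) (e, f, g, h)
      (cubeSym 1 (fun j => decide (j = 1)) v)) = joinQuad (c, d, a, b) (g, h, e, f) := by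
    funext v
    have w0 : cubeSym 1 (fun j => decide (j = 1)) v 0 = v 0 := by simp [cubeSym]
    have w1 : cubeSym 1 (fun j => decide (j = 1)) v 1 = !(v 1) := by simp [cubeSym]
    have w2 : cubeSym 1 (fun j => decide (j = 1)) v 2 = v 2 := by simp [cubeSym]
    cases h0 : v 0 <;> cases h1 : v 1 <;> cases h2 : v 2 <;>
      simp [joinQuad, quadAt, w0, w1, w2, h0, h1, h2]
  rwa [hk] at H2

private lemma aux_flip2 (hQ : IsWeakParallelepiped P Q) {a b c d e f g h : X}
    (H : joinQuad (a, b, c, d) (e, f, g, h) ∈ Q) :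
    joinQuad (b, a, d, c) (f, e, h, g) ∈ Q := by
  have H2 := hQ.2.2.1 1 (fun j => decide (j = 2)) _ H
  have hk : (fun v => joinQuad (a, b, c, d) (e, f, g, h)
      (cubeSym 1 (fun j => decide (j = 2)) v)) = joinQuad (b, a, d, c) (f, e, h, g) := by
    funext v
    have w0 : cubeSym 1 (fun j => decide (j = 2)) v 0 = v 0 := by simp [cubeSym]
    have w1 : cubeSym 1 (fun j => decide (j = 2)) v 1 = v 1 := by simp [cubeSym]
    have w2 : cubeSym 1 (fun j => decide (j = 2)) v 2 = !(v 2) := by simp [cubeSym]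
    cases h0 : v 0 <;> cases h1 : v 1 <;> cases h2 : v 2 <;>
      simp [joinQuad, quadAt, w0, w1, w2, h0, h1, h2]
  rwa [hk] at H2

private lemma aux_comp1 (hQ : IsWeakParallelepiped P Q) {a b e f a' b' e' f' g h g' h' : X}
    (H1 : joinQuad (a, b, e, f) (a', b', e', f') ∈ Q)
    (H2 : joinQuad (e, f, g, h) (e', f', g', h') ∈ Q) :
    joinQuad (a, b, g, h) (a', b', g', h') ∈ Q :=
  aux_s01 hQ (aux_qtrans hQ (aux_s01 hQ H1) (aux_s01 hQ H2))

private lemma aux_face0 (hQ : IsWeakParallelepiped P Q) {p q : Quad X}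
    (H : joinQuad p q ∈ Q) : p ∈ P := by
  have hf := hQ.2.1 _ H 0 false
  have e : face (joinQuad p q) 0 false = p := by
    obtain ⟨a, b, c, d⟩ := p
    rfl
  rwa [e] at hf

private lemma aux_face13 (hQ : IsWeakParallelepiped P Q) {a b c d e f g h : X}
    (H : joinQuad (a, b, c, d) (e, f, g, h) ∈ Q) : (a, c, e, g) ∈ P :=
  aux_pswap hQ.1 (aux_face0 hQ (aux_s02 hQ H))

private lemma aux_face34 (hQ : IsWeakParallelepiped P Q) {a b c d e f g h : X}
    (H : joinQuad (a, b, c, d) (e, f, g, h) ∈ Q) : (c, d, g, h) ∈ P :=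
  aux_face0 hQ (aux_s01 hQ (aux_flip1 hQ H))

private lemma aux_beta (hQ : IsWeakParallelepiped P Q) {a A b B : X}
    (H : joinQuad (a, a, a, A) (b, b, b, B) ∈ Q) :
    joinQuad (a, b, a, b) (a, b, A, B) ∈ Q :=
  aux_s12 hQ (aux_s01 hQ H)

private lemma aux_inv (hQ : IsWeakParallelepiped P Q) {a b c d : X}
    (H : joinQuad (a, a, a, b) (c, c, c, d) ∈ Q) :
    joinQuad (b, b, b, a) (d, d, d, c) ∈ Q := by
  have H2 := aux_beta hQ H
  have C1 : joinQuad (b, d, a, c) (a, c, a, c) ∈ Q := aux_flip1 hQ (aux_qsymm hQ H2)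
  have C2 : joinQuad (b, d, b, d) (a, c, a, c) ∈ Q := aux_comp1 hQ C1 (aux_qsymm hQ H2)
  have C3 : joinQuad (b, d, b, d) (b, d, a, c) ∈ Q := aux_qtrans hQ C2 (aux_qsymm hQ C1)
  exact aux_s01 hQ (aux_s12 hQ C3)

private lemma aux_cancel111 (hs : IsStrongParallelepiped P Q) {p1 p2 p3 p4 p5 p6 p7 α β : X}
    (H1 : joinQuad (p1, p2, p3, p4) (p5, p6, p7, α) ∈ Q)
    (H2 : joinQuad (p1, p2, p3, p4) (p5, p6, p7, β) ∈ Q) : α = β := by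
  have f1 := aux_face0 hs.1 H1
  have f2 := aux_face13 hs.1 H1
  have f3 := aux_face0 hs.1 (aux_s01 hs.1 H1)
  exact (hs.2 p1 p2 p3 p4 p5 p6 p7 f1 f2 f3).unique H1 H2

private lemma aux_cancel110 (hs : IsStrongParallelepiped P Q) {p1 p2 p3 p4 p5 p6 p8 α β : X}
    (H1 : joinQuad (p1, p2, p3, p4) (p5, p6, α, p8) ∈ Q)
    (H2 : joinQuad (p1, p2, p3, p4) (p5, p6, β, p8) ∈ Q) : α = β :=
  aux_cancel111 hs (aux_flip2 hs.1 H1) (aux_flip2 hs.1 H2)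

end Aux


/-- For a strong parallelepiped structure on `X` with basepoint `i`, the
structure group acts transitively on `X` if and only if, for every `s = ⟨a₀,b₀⟩` in the base,
the exact sequence `0 → F → P_s → B → 0` splits, i.e. there is a group homomorphism
`φ : B → P_s` with `q_s ∘ φ = id_B`. -/
theorem transitive_iff_splits (X : Type) [Nonempty X]
    (P : Set (Quad X)) (Q : Set (Cube X)) (h : IsStrongParallelepiped P Q) (i : X) :
    (∀ x y : X, ∃ g ∈ structSet P Q, g x = y) ↔
      (∀ a₀ b₀ : X, IsSplittingAt P Q i a₀ b₀) := by
  have hQ : IsWeakParallelepiped P Q := h.1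
  have hP : IsWeakParallelogram P := hQ.1
  constructor
  · -- transitivity implies splitting
    intro htrans a₀ b₀
    obtain ⟨g, hg, hgab⟩ := htrans a₀ b₀
    have L2 : ∀ z z' : X, (z, g z, z', g z') ∈ P := by
      intro z z'
      have hc := (hg (z, z, z', z') (aux_ppair hP z z')).2
      exact aux_pswap hP (aux_psymm hP (aux_face13 hQ hc))
    have L1' : ∀ z z' w w' : X, (z, z', w, w') ∈ P →
        joinQuad (z, g z, z', g z') (w, g w, w', g w') ∈ Q := by
      intro z z' w w' hp
      have hc := (hg (z, z', w, w') hp).2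
      exact aux_s12 hQ (aux_s01 hQ (aux_qsymm hQ hc))
    refine ⟨fun z => (i, g i, z, g z), fun x => L2 i x, ?_, fun x => aux_prefl hP i x, ?_, ?_⟩
    · intro x
      have hx := L2 a₀ i
      rwa [hgab] at hx
    · intro x y hxy
      exact L1' i x i y hxy
    · intro x1 x2 x3 h13
      exact ⟨x3, g x3, L1' x1 x3 i x2 h13, aux_qrefl hQ (L2 i x3)⟩
  · -- splitting implies transitivity
    intro hsplit x y
    obtain ⟨ψ, h1, h2, h3, h4, h5⟩ := hsplit x y
    obtain ⟨w, hw⟩ := aux_pcomplete hP x y i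
    have hAB : ∀ z : X, ((ψ z).1, (ψ z).2.1, i, w) ∈ P := fun z =>
      aux_ptrans hP (aux_psymm hP (h2 z)) hw
    have exu := fun z => h.2 (ψ z).1 (ψ z).2.1 (ψ z).2.2.1 (ψ z).2.2.2 i w z
      (h1 z) (h3 z) (hAB z)
    choose g hgc using fun z => (exu z).exists
    have hgu : ∀ z z', joinQuad (ψ z) (i, w, z, z') ∈ Q → z' = g z := fun z z' H =>
      (exu z).unique H (hgc z)
    have hyz : ∀ z : X, (x, y, z, g z) ∈ P := by
      intro z
      have fc : ((ψ z).2.2.1, (ψ z).2.2.2, z, g z) ∈ P := aux_face34 hQ (hgc z)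
      exact aux_ptrans hP (aux_ptrans hP (h2 z) (h1 z)) fc
    have main : ∀ a b c d : X, (a, b, c, d) ∈ P →
        joinQuad (g a, g b, g c, g d) (a, b, c, d) ∈ Q := by
      intro a b c d hp
      obtain ⟨u, hu⟩ := aux_pcomplete hP a b i
      obtain ⟨u', hu'⟩ := aux_pcomplete hP c d i
      have huu' : (i, u, i, u') ∈ P :=
        aux_ptrans hP (aux_ptrans hP (aux_psymm hP hu) hp) hu'
      obtain ⟨c₁, d₁, hA, hB⟩ := h5 a u b hu
      obtain ⟨c₂, d₂, hA', hB'⟩ := h5 c u' d hu'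
      have cube1 : joinQuad ((ψ a).2.2.1, (ψ a).2.2.2, c₁, d₁) (a, g a, b, g b) ∈ Q :=
        aux_comp1 hQ (aux_flip1 hQ (hgc a)) (aux_qtrans hQ hB (hgc b))
      have cube2 : joinQuad ((ψ c).2.2.1, (ψ c).2.2.2, c₂, d₂) (c, g c, d, g d) ∈ Q :=
        aux_comp1 hQ (aux_flip1 hQ (hgc c)) (aux_qtrans hQ hB' (hgc d))
      have eu : joinQuad (ψ u) (a, g a, b, g b) ∈ Q :=
        aux_qtrans hQ (aux_qsymm hQ hA) cube1
      have eu' : joinQuad (ψ u') (c, g c, d, g d) ∈ Q :=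
        aux_qtrans hQ (aux_qsymm hQ hA') cube2
      have big : joinQuad (a, g a, b, g b) (c, g c, d, g d) ∈ Q :=
        aux_qtrans hQ (aux_qsymm hQ eu) (aux_qtrans hQ (h4 u u' huu') eu')
      exact aux_qsymm hQ (aux_s01 hQ (aux_s12 hQ big))
    have ginj : Function.Injective g := by
      intro z z' hzz
      have f2' := hyz z'
      rw [← hzz] at f2'
      have hzz' : (z, g z, z', g z) ∈ P := aux_ptrans hP (aux_psymm hP (hyz z)) f2'
      have fib : (i, z, i, z') ∈ P := by
        have k1 : (z, z', g z, g z) ∈ P := aux_pswap hP hzz'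
        have k2 : (i, i, z, z') ∈ P :=
          aux_ptrans hP (aux_ppair hP i (g z)) (aux_psymm hP k1)
        exact aux_pswap hP k2
      have hgz' := hgc z'
      rw [← hzz] at hgz'
      have e1 : joinQuad (i, w, z, g z) (i, w, z', g z) ∈ Q :=
        aux_qtrans hQ (aux_qsymm hQ (hgc z)) (aux_qtrans hQ (h4 z z' fib) hgz')
      have ftop : (i, w, z, g z) ∈ P := aux_face0 hQ (aux_qsymm hQ (hgc z))
      exact (aux_cancel110 h e1 (aux_qrefl hQ ftop)).symm
    have gsurj : Function.Surjective g := by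
      intro v
      obtain ⟨z₀, hz₀⟩ := aux_pcomplete hP w v i
      have fBA : ((ψ z₀).2.1, (ψ z₀).1, (ψ z₀).2.2.2, (ψ z₀).2.2.1) ∈ P :=
        aux_prev hP (h1 z₀)
      have fBD : ((ψ z₀).2.1, (ψ z₀).2.2.2, w, v) ∈ P := by
        have k1 : ((ψ z₀).2.1, (ψ z₀).2.2.2, (ψ z₀).1, (ψ z₀).2.2.1) ∈ P :=
          aux_psymm hP (aux_pswap hP (h1 z₀))
        exact aux_ptrans hP (aux_ptrans hP k1 (h3 z₀)) (aux_psymm hP hz₀)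
      have fBw : ((ψ z₀).2.1, (ψ z₀).1, w, i) ∈ P := aux_prev hP (hAB z₀)
      obtain ⟨z', hz'⟩ := (h.2 (ψ z₀).2.1 (ψ z₀).1 (ψ z₀).2.2.2 (ψ z₀).2.2.1 w i v
        fBA fBD fBw).exists
      have cube : joinQuad (ψ z₀) (i, w, z', v) ∈ Q := aux_flip2 hQ hz'
      have ff : ((ψ z₀).1, (ψ z₀).2.2.1, i, z') ∈ P := aux_face13 hQ cube
      have fib : (i, z₀, i, z') ∈ P := aux_ptrans hP (aux_psymm hP (h3 z₀)) ff
      have cube' : joinQuad (ψ z') (i, w, z', v) ∈ Q :=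
        aux_qtrans hQ (aux_qsymm hQ (h4 z₀ z' fib)) cube
      exact ⟨z', (hgu z' v cube').symm⟩
    have hfib : (i, g x, i, y) ∈ P := by
      have k1 : (x, x, y, g x) ∈ P := aux_pswap hP (hyz x)
      have k2 : (y, g x, i, i) ∈ P := aux_ptrans hP (aux_psymm hP k1) (aux_ppair hP x i)
      have k3 : (i, i, g x, y) ∈ P := aux_prev hP (aux_psymm hP k2)
      exact aux_pswap hP k3
    have bq : (g x, g x, g x, y) ∈ P :=
      aux_ptrans hP (aux_ppair hP (g x) i) (aux_pswap hP hfib)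
    have exv : ∀ z : X, ∃! z', joinQuad (g x, g x, g x, y) (z, z, z, z') ∈ Q := fun z =>
      h.2 (g x) (g x) (g x) y z z z bq (aux_ppair hP (g x) z) (aux_ppair hP (g x) z)
    choose vf hvf using fun z => (exv z).exists
    have hvu : ∀ z z', joinQuad (g x, g x, g x, y) (z, z, z, z') ∈ Q → z' = vf z :=
      fun z z' H => (exv z).unique H (hvf z)
    have bq' : (y, y, y, g x) ∈ P := by
      have k1 : (i, y, i, g x) ∈ P := aux_pswap hP (aux_prev hP (aux_pswap hP hfib))
      exact aux_ptrans hP (aux_ppair hP y i) (aux_pswap hP k1)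
    have exv' : ∀ z : X, ∃! z', joinQuad (y, y, y, g x) (z, z, z, z') ∈ Q := fun z =>
      h.2 y y y (g x) z z z bq' (aux_ppair hP y z) (aux_ppair hP y z)
    choose vg hvg using fun z => (exv' z).exists
    have hvgu : ∀ z z', joinQuad (y, y, y, g x) (z, z, z, z') ∈ Q → z' = vg z :=
      fun z z' H => (exv' z).unique H (hvg z)
    have vlinv : Function.LeftInverse vg vf := fun z =>
      (hvgu (vf z) z (aux_inv hQ (hvf z))).symm
    have vrinv : Function.RightInverse vg vf := fun z =>
      (hvu (vg z) z (aux_inv hQ (hvg z))).symm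
    have vmain : ∀ a b c d : X, (a, b, c, d) ∈ P →
        joinQuad (vf a, vf b, vf c, vf d) (a, b, c, d) ∈ Q := by
      intro a b c d hp
      have hvv : ∀ z z' : X, joinQuad (z, z, z, vf z) (z', z', z', vf z') ∈ Q := fun z z' =>
        aux_qtrans hQ (aux_qsymm hQ (hvf z)) (hvf z')
      have D12 : joinQuad (a, b, a, b) (a, b, vf a, vf b) ∈ Q := aux_beta hQ (hvv a b)
      have D34 : joinQuad (c, d, c, d) (c, d, vf c, vf d) ∈ Q := aux_beta hQ (hvv c d)
      have E : joinQuad (a, b, a, b) (c, d, c, d) ∈ Q := aux_s01 hQ (aux_qrefl hQ hp)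
      have chain : joinQuad (a, b, vf a, vf b) (c, d, vf c, vf d) ∈ Q :=
        aux_qtrans hQ (aux_qsymm hQ D12) (aux_qtrans hQ E D34)
      exact aux_qsymm hQ (aux_s01 hQ chain)
    let gE : Equiv.Perm X := Equiv.ofBijective g ⟨ginj, gsurj⟩
    let vE : Equiv.Perm X := ⟨vf, vg, vlinv, vrinv⟩
    refine ⟨gE.trans vE, ?_, ?_⟩
    · intro p hp
      obtain ⟨a, b, c, d⟩ := p
      have m1 : joinQuad (g a, g b, g c, g d) (a, b, c, d) ∈ Q := main a b c d hp
      have m1P : (g a, g b, g c, g d) ∈ P := aux_face0 hQ m1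
      have m2 : joinQuad (vf (g a), vf (g b), vf (g c), vf (g d)) (g a, g b, g c, g d) ∈ Q :=
        vmain _ _ _ _ m1P
      exact ⟨aux_face0 hQ m2, aux_qtrans hQ m2 m1⟩
    · show vf (g x) = y
      exact (hvu (g x) y (aux_qrefl hQ bq)).symm


end HK
end
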